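/- arXiv:2105.07359 — 5 statements merged into one kernel-verified Lean document; each statement's English description precedes it below -/
import Mathlib

section
/- For every real number c > 0 with c ≠ 1, the Lebesgue integral ∫₀^∞ log₂(1+η) · c/(η+c)² dη equals (c/(c−1)) · log₂ c. (This is the paper's Theorem 2: the average channel capacity per unit bandwidth for equally probable zero-mean constellations, where the SINR η has density c/(η+c)² on (0,∞).) -/
open MeasureTheory Real Filter Topology


theorem key_log_integral (c : ℝ) (hc : 0 < c) (hc1 : c ≠ 1) :
    ∫ η in Set.Ioi (0 : ℝ), Real.log (1 + η) * (c / (η + c) ^ 2)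
      = (c / (c - 1)) * Real.log c := by
  have hc1' : c - 1 ≠ 0 := sub_ne_zero.mpr hc1
  set f : ℝ → ℝ := fun x => -(c * Real.log (1 + x) / (x + c))
    + (c / (c - 1)) * (Real.log (1 + x) - Real.log (x + c)) with hf
  have hderiv : ∀ x ∈ Set.Ioi (0:ℝ), HasDerivAt f (Real.log (1 + x) * (c / (x + c) ^ 2)) x := by
    intro x hx
    have hx0 : 0 < x := hx
    have h1x : (0:ℝ) < 1 + x := by linarith
    have hxc : (0:ℝ) < x + c := by linarith
    have hlog1 : HasDerivAt (fun y => Real.log (1 + y)) (1 / (1 + x)) x := by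
      have := (Real.hasDerivAt_log h1x.ne').comp x ((hasDerivAt_id x).const_add 1)
      simpa [one_div, Function.comp_def] using this
    have hlog2 : HasDerivAt (fun y => Real.log (y + c)) (1 / (x + c)) x := by
      have := (Real.hasDerivAt_log hxc.ne').comp x ((hasDerivAt_id x).add_const c)
      simpa [one_div, Function.comp_def] using this
    have hA : HasDerivAt (fun y => c * Real.log (1 + y) / (y + c))
        ((c * (1 / (1 + x)) * (x + c) - c * Real.log (1 + x) * 1) / (x + c) ^ 2) x :=
      (hlog1.const_mul c).div ((hasDerivAt_id x).add_const c) hxc.ne'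
    have hB : HasDerivAt f
        (-((c * (1 / (1 + x)) * (x + c) - c * Real.log (1 + x) * 1) / (x + c) ^ 2)
          + (c / (c - 1)) * (1 / (1 + x) - 1 / (x + c))) x :=
      hA.neg.add ((hlog1.sub hlog2).const_mul _)
    convert hB using 1
    field_simp
    ring
  have hcont : ContinuousWithinAt f (Set.Ici 0) 0 := by
    have h1 : ContinuousAt f 0 := by
      have h1x : (1:ℝ) + 0 ≠ 0 := by norm_num
      have hxc : (0:ℝ) + c ≠ 0 := by simpa using hc.ne'
      fun_prop (disch := simp_all)
    exact h1.continuousWithinAt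
  have hratio : Tendsto (fun x : ℝ => (1 + x) / (x + c)) atTop (𝓝 1) := by
    have : Tendsto (fun x : ℝ => 1 + (1 - c) / (x + c)) atTop (𝓝 (1 + 0)) := by
      exact tendsto_const_nhds.add ((tendsto_const_nhds.div_atTop
        (tendsto_atTop_add_const_right _ c tendsto_id)))
    rw [show (1:ℝ) = 1 + 0 by ring]
    refine this.congr' ?_
    filter_upwards [eventually_gt_atTop (0:ℝ)] with x hx
    have hxc : x + c ≠ 0 := by positivity
    field_simp
    ring
  have htendsto : Tendsto f atTop (𝓝 0) := by
    have hA : Tendsto (fun x : ℝ => c * Real.log (1 + x) / (x + c)) atTop (𝓝 0) := by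
      have hlog : Tendsto (fun x : ℝ => Real.log (1 + x) / (1 + x)) atTop (𝓝 0) := by
        have h0 : Tendsto (fun y : ℝ => Real.log y / y) atTop (𝓝 0) :=
          Real.isLittleO_log_id_atTop.tendsto_div_nhds_zero
        exact h0.comp (tendsto_atTop_add_const_left _ 1 tendsto_id)
      have := (hlog.mul hratio).const_mul c
      rw [zero_mul, mul_zero] at this
      refine this.congr' ?_
      filter_upwards [eventually_gt_atTop (0:ℝ)] with x hx
      have h1x : (1:ℝ) + x ≠ 0 := by positivity
      field_simp
    have hB : Tendsto (fun x : ℝ => (c / (c - 1)) * (Real.log (1 + x) - Real.log (x + c)))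
        atTop (𝓝 0) := by
      have hl : Tendsto (fun x : ℝ => Real.log ((1 + x) / (x + c))) atTop (𝓝 0) := by
        have := (Real.continuousAt_log one_ne_zero).tendsto.comp hratio
        simpa [Function.comp_def] using this
      have := hl.const_mul (c / (c - 1))
      rw [mul_zero] at this
      refine this.congr' ?_
      filter_upwards [eventually_gt_atTop (0:ℝ)] with x hx
      rw [Real.log_div (by positivity) (by positivity)]
    have := hA.neg.add hB
    simpa using this
  have hpos : ∀ x ∈ Set.Ioi (0:ℝ), 0 ≤ Real.log (1 + x) * (c / (x + c) ^ 2) := by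
    intro x hx
    have hx0 : 0 < x := hx
    have : (0:ℝ) ≤ Real.log (1 + x) := Real.log_nonneg (by linarith)
    positivity
  have := integral_Ioi_of_hasDerivAt_of_nonneg hcont hderiv hpos htendsto
  rw [this]
  simp only [hf, add_zero, zero_add, Real.log_one]
  field_simp
  ring

/-- Theorem 2 of the paper: the average channel capacity per unit bandwidth for
equally probable zero-mean constellations, where the SINR `η` has density
`c / (η + c)²` on `(0, ∞)`. -/
theorem average_capacity_equiprobable (c : ℝ) (hc : 0 < c) (hc1 : c ≠ 1) :
    ∫ η in Set.Ioi (0 : ℝ), Real.logb 2 (1 + η) * (c / (η + c) ^ 2)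
      = (c / (c - 1)) * Real.logb 2 c := by
  have h := key_log_integral c hc hc1
  calc ∫ η in Set.Ioi (0 : ℝ), Real.logb 2 (1 + η) * (c / (η + c) ^ 2)
      = (Real.log 2)⁻¹ * ∫ η in Set.Ioi (0 : ℝ), Real.log (1 + η) * (c / (η + c) ^ 2) := by
        rw [← integral_const_mul]
        congr 1
        ext η
        rw [Real.logb]
        ring
    _ = (c / (c - 1)) * Real.logb 2 c := by rw [h, Real.logb]; ring
end

section
/- Let σ_s, σ_I > 0 and μ₁, μ₂ ∈ ℝ, and set k = √(μ₁²+μ₂²)/σ_s and c = σ_s²/σ_I². Let X₁, X₂, Y₁, Y₂ be independent real random variables with X₁ Gaussian of mean μ₁ and variance σ_s²/2, X₂ Gaussian of mean μ₂ and variance σ_s²/2, and Y₁, Y₂ Gaussian of mean 0 and variance σ_I²/2. Then the random variable η = (X₁²+X₂²)/(Y₁²+Y₂²) has probability density f_{k,c} with respect to Lebesgue measure on (0,∞); that is, the law of η has density η ↦ e^{−k²}(1+k²)·c · e^{η k²/(η+c)} · (η + c/(1+k²)) / (η+c)³ on (0,∞). (This is the Lemma of the paper's Appendix C: the distribution of the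 SINR, the ratio of the squared modulus of a complex Gaussian with mean μ = μ₁ + iμ₂ and total variance σ_s² to the squared modulus of an independent zero-mean complex Gaussian with total variance σ_I².) -/
open MeasureTheory ProbabilityTheory Real

/-- The SINR density derived in the paper's Appendix C. -/
noncomputable def sinrDensity (k c η : ℝ) : ℝ :=
  Real.exp (-k ^ 2) * (1 + k ^ 2) * c * Real.exp (η * k ^ 2 / (η + c)) *
    (η + c / (1 + k ^ 2)) / (η + c) ^ 3

open Set Filter
open scoped ENNReal NNReal

namespace SinrAux

noncomputable def G (k c t : ℝ) : ℝ := t / (t + c) * rexp (-(k ^ 2 * c / (t + c)))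

lemma iIndepFun_congr {ι Ω : Type*} [MeasurableSpace Ω] {μ : Measure Ω}
    {β : ι → Type*} [m : ∀ i, MeasurableSpace (β i)] {f g : ∀ i, Ω → β i}
    (h : iIndepFun f μ) (h' : ∀ i, f i =ᵐ[μ] g i) : iIndepFun g μ := by
  rw [iIndepFun_iff_measure_inter_preimage_eq_mul] at h ⊢
  intro S sets hsets
  have hae : ∀ᵐ ω ∂μ, ∀ i ∈ S, f i ω = g i ω := by
    rw [eventually_all_finset]; exact fun i _ => h' i
  have h1 : μ (⋂ i ∈ S, f i ⁻¹' sets i) = μ (⋂ i ∈ S, g i ⁻¹' sets i) := by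
    refine measure_congr (Filter.eventuallyEq_set.2 (hae.mono fun ω hω => ?_))
    simp only [mem_iInter, mem_preimage]
    exact ⟨fun H i hi => hω i hi ▸ H i hi, fun H i hi => (hω i hi).symm ▸ H i hi⟩
  have h2 : ∀ i ∈ S, μ (f i ⁻¹' sets i) = μ (g i ⁻¹' sets i) := fun i hi =>
    measure_congr (Filter.eventuallyEq_set.2 ((h' i).mono fun ω hω => by
      simp only [mem_preimage, hω]))
  rw [← h1, h S hsets]
  exact Finset.prod_congr rfl h2

lemma withDensity_prod {α β : Type*} [MeasurableSpace α] [MeasurableSpace β]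
    (μ : Measure α) (ν : Measure β) {f : α → ℝ≥0∞} {g : β → ℝ≥0∞}
    [SigmaFinite μ] [SigmaFinite ν] [SigmaFinite (μ.withDensity f)] [SigmaFinite (ν.withDensity g)]
    (hf : Measurable f) (hg : Measurable g) :
    (μ.withDensity f).prod (ν.withDensity g)
      = (μ.prod ν).withDensity (fun p => f p.1 * g p.2) :=
  Measure.prod_eq fun s t hs ht => by
    rw [withDensity_apply _ (hs.prod ht), ← Measure.prod_restrict,
      lintegral_prod_mul hf.aemeasurable hg.aemeasurable,
      withDensity_apply _ hs, withDensity_apply _ ht]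

/-! ### 1D Gaussian Laplace transform -/

lemma integrable_pdf_mul_exp (μ v l : ℝ) (hv : 0 < v) (hl : 0 ≤ l) :
    Integrable (fun x => gaussianPDFReal μ v.toNNReal x * rexp (-(l * x ^ 2))) := by
  refine (integrable_gaussianPDFReal μ v.toNNReal).mono ?_ ?_
  · exact ((measurable_gaussianPDFReal _ _).mul
      (by fun_prop : Measurable fun x : ℝ => rexp (-(l * x ^ 2)))).aestronglyMeasurable
  · refine ae_of_all _ fun x => ?_
    rw [norm_mul, Real.norm_eq_abs, Real.norm_eq_abs,
      abs_of_nonneg (gaussianPDFReal_nonneg _ _ _), abs_of_nonneg (Real.exp_pos _).le]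
    calc gaussianPDFReal μ v.toNNReal x * rexp (-(l * x ^ 2))
        ≤ gaussianPDFReal μ v.toNNReal x * 1 := by
          refine mul_le_mul_of_nonneg_left ?_ (gaussianPDFReal_nonneg _ _ _)
          exact Real.exp_le_one_iff.2 (neg_nonpos.2 (by positivity)) 
      _ = gaussianPDFReal μ v.toNNReal x := mul_one _
    

lemma integral_pdf_mul_exp (μ v l : ℝ) (hv : 0 < v) (hl : 0 < l) :
    ∫ x, gaussianPDFReal μ v.toNNReal x * rexp (-(l * x ^ 2))
      = (Real.sqrt (1 + 2 * l * v))⁻¹ * rexp (-(l * μ ^ 2 / (1 + 2 * l * v))) := by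
  have hπ := Real.pi_pos
  set b : ℝ := l + 1 / (2 * v) with hb_def
  have hb : 0 < b := by positivity
  set m : ℝ := μ / (2 * b * v) with hm_def
  have h1 : (0:ℝ) < 1 + 2 * l * v := by positivity
  have key : ∀ x, gaussianPDFReal μ v.toNNReal x * rexp (-(l * x ^ 2))
      = (Real.sqrt (2 * π * v))⁻¹ * rexp (-(l * μ ^ 2 / (1 + 2 * l * v)))
        * rexp (-b * (x - m) ^ 2) := by
    intro x
    rw [gaussianPDFReal, Real.coe_toNNReal _ hv.le]
    simp only [mul_assoc, ← Real.exp_add]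
    congr 1
    congr 1
    rw [hm_def, hb_def]
    field_simp
    ring
  rw [integral_congr_ae (ae_of_all _ key)]
  rw [MeasureTheory.integral_const_mul, integral_sub_right_eq_self (fun y => rexp (-b * y ^ 2)) m,
    integral_gaussian]
  have harg : (2 * π * v)⁻¹ * (π / b) = (1 + 2 * l * v)⁻¹ := by
    rw [hb_def]; field_simp; ring
  have hsq : (Real.sqrt (2 * π * v))⁻¹ * Real.sqrt (π / b) = (Real.sqrt (1 + 2 * l * v))⁻¹ := by
    rw [← Real.sqrt_inv, ← Real.sqrt_mul (by positivity), harg, Real.sqrt_inv]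
  rw [← hsq]
  ring

lemma lintegral_exp_gaussian (μ v l : ℝ) (hv : 0 < v) (hl : 0 < l) :
    ∫⁻ x, ENNReal.ofReal (rexp (-(l * x ^ 2))) ∂(gaussianReal μ v.toNNReal)
      = ENNReal.ofReal
          ((Real.sqrt (1 + 2 * l * v))⁻¹ * rexp (-(l * μ ^ 2 / (1 + 2 * l * v)))) := by
  have hv' : v.toNNReal ≠ 0 := by
    simp only [ne_eq, Real.toNNReal_eq_zero, not_le]; exact hv
  rw [gaussianReal_of_var_ne_zero _ hv',
    lintegral_withDensity_eq_lintegral_mul _ (measurable_gaussianPDF _ _) (by fun_prop)]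
  have : ∀ x : ℝ, (gaussianPDF μ v.toNNReal * fun x => ENNReal.ofReal (rexp (-(l * x ^ 2)))) x
      = ENNReal.ofReal (gaussianPDFReal μ v.toNNReal x * rexp (-(l * x ^ 2))) := by
    intro x
    simp only [Pi.mul_apply, gaussianPDF]
    rw [← ENNReal.ofReal_mul (gaussianPDFReal_nonneg _ _ _)]
  rw [lintegral_congr this,
    ← ofReal_integral_eq_lintegral_ofReal (integrable_pdf_mul_exp μ v l hv hl.le)
      (ae_of_all _ fun x => mul_nonneg (gaussianPDFReal_nonneg _ _ _) (Real.exp_pos _).le),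
    integral_pdf_mul_exp μ v l hv hl]

/-! ### Radial integral -/

lemma radial_hasDeriv (w K : ℝ) (hw : 0 < w) (r : ℝ) :
    HasDerivAt (fun r => -(w * K) * rexp (-r ^ 2 / (2 * w)))
      (r * (K * rexp (-r ^ 2 / (2 * w)))) r := by
  have h1 : HasDerivAt (fun r : ℝ => -r ^ 2 / (2 * w)) (-(2 * r) / (2 * w)) r := by
    simpa using ((hasDerivAt_pow 2 r).neg.div_const (2 * w))
  have h2 := (h1.exp).const_mul (-(w * K))
  refine h2.congr_deriv ?_
  field_simp

lemma radial_tendsto (w K : ℝ) (hw : 0 < w) :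
    Tendsto (fun r => -(w * K) * rexp (-r ^ 2 / (2 * w))) atTop (nhds 0) := by
  rw [show (0:ℝ) = -(w * K) * 0 by ring]
  refine Tendsto.const_mul _ ?_
  refine Real.tendsto_exp_atBot.comp ?_
  have h2 : Tendsto (fun x : ℝ => -x ^ 2) atTop atBot :=
    tendsto_neg_atTop_atBot.comp (tendsto_pow_atTop two_ne_zero)
  exact h2.atBot_div_const (by positivity)

lemma radial_nonneg (w K s : ℝ) (hK : 0 ≤ K) (hs : 0 ≤ s) :
    ∀ r ∈ Ioi s, 0 ≤ r * (K * rexp (-r ^ 2 / (2 * w))) := by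
  intro r hr
  have : (0:ℝ) ≤ r := le_trans hs (le_of_lt hr)
  positivity

lemma radial_integrableOn (w K s : ℝ) (hw : 0 < w) (hK : 0 ≤ K) (hs : 0 ≤ s) :
    IntegrableOn (fun r => r * (K * rexp (-r ^ 2 / (2 * w)))) (Ioi s) :=
  integrableOn_Ioi_deriv_of_nonneg' (fun r _ => radial_hasDeriv w K hw r)
    (radial_nonneg w K s hK hs) (radial_tendsto w K hw)

lemma radial_integral (w K s : ℝ) (hw : 0 < w) (hK : 0 ≤ K) (hs : 0 ≤ s) :
    ∫ r in Ioi s, r * (K * rexp (-r ^ 2 / (2 * w)))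
      = w * K * rexp (-s ^ 2 / (2 * w)) := by
  rw [integral_Ioi_of_hasDerivAt_of_nonneg' (fun r _ => radial_hasDeriv w K hw r)
    (radial_nonneg w K s hK hs) (radial_tendsto w K hw)]
  ring

/-! ### 2D Gaussian tail via polar coordinates -/

lemma sqset_inter (x : ℝ) (hx : 0 ≤ x) :
    {r : ℝ | x ≤ r ^ 2} ∩ Ioi 0 = Ici (Real.sqrt x) ∩ Ioi 0 := by
  ext r
  simp only [mem_inter_iff, mem_setOf_eq, mem_Ici, mem_Ioi, and_congr_left_iff]
  intro hr
  constructor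
  · intro h
    calc Real.sqrt x ≤ Real.sqrt (r ^ 2) := Real.sqrt_le_sqrt h
      _ = r := by rw [Real.sqrt_sq hr.le]
  · intro h
    calc x = Real.sqrt x ^ 2 := (Real.sq_sqrt hx).symm
      _ ≤ r ^ 2 := pow_le_pow_left₀ (Real.sqrt_nonneg x) h 2

lemma sqset_ae (x : ℝ) (hx : 0 ≤ x) :
    ({r : ℝ | x ≤ r ^ 2} ∩ Ioi 0 : Set ℝ) =ᵐ[volume] Ioi (Real.sqrt x) := by
  rw [sqset_inter x hx]
  have h1 : (Ici (Real.sqrt x) : Set ℝ) =ᵐ[volume] Ioi (Real.sqrt x) := Ioi_ae_eq_Ici.symm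
  refine (h1.inter (Filter.EventuallyEq.refl _ _)).trans ?_
  rw [Ioi_inter_Ioi, sup_eq_left.2 (Real.sqrt_nonneg x)]
  exact Filter.EventuallyEq.rfl

lemma integral_region (w x : ℝ) (hw : 0 < w) (hx : 0 ≤ x) :
    ∫ p : ℝ × ℝ in {p : ℝ × ℝ | x ≤ p.1 ^ 2 + p.2 ^ 2},
        gaussianPDFReal 0 w.toNNReal p.1 * gaussianPDFReal 0 w.toNNReal p.2
      = rexp (-x / (2 * w)) := by
  have hπ := Real.pi_pos
  set c : ℝ := (Real.sqrt (2 * π * w))⁻¹ with hc_def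
  have hc : 0 ≤ c := by positivity
  have hpdf : ∀ y : ℝ, gaussianPDFReal 0 w.toNNReal y = c * rexp (-y ^ 2 / (2 * w)) := by
    intro y
    rw [gaussianPDFReal, Real.coe_toNNReal _ hw.le, sub_zero]
  set s : ℝ := Real.sqrt x with hs_def
  have hs : 0 ≤ s := Real.sqrt_nonneg x
  set A : Set ℝ := {r : ℝ | x ≤ r ^ 2} with hA_def
  have hA : MeasurableSet A := measurableSet_le measurable_const (by fun_prop)
  set g : ℝ → ℝ := fun r => r * (c ^ 2 * rexp (-r ^ 2 / (2 * w))) with hg_def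
  set ψ : ℝ → ℝ := A.indicator g with hψ_def
  have hS : MeasurableSet {p : ℝ × ℝ | x ≤ p.1 ^ 2 + p.2 ^ 2} :=
    measurableSet_le measurable_const (by fun_prop)
  rw [← integral_indicator hS]
  rw [← integral_comp_polarCoord_symm]
  have hFeq : ∀ p : ℝ × ℝ, p.1 • (({p : ℝ × ℝ | x ≤ p.1 ^ 2 + p.2 ^ 2}).indicator
        (fun p => gaussianPDFReal 0 w.toNNReal p.1 * gaussianPDFReal 0 w.toNNReal p.2)
        (polarCoord.symm p))
      = ψ p.1 := by
    intro p
    have habs : (polarCoord.symm p).1 ^ 2 + (polarCoord.symm p).2 ^ 2 = p.1 ^ 2 := by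
      rw [polarCoord_symm_apply]
      simp only
      rw [mul_pow, mul_pow, ← mul_add, Real.cos_sq_add_sin_sq, mul_one]
    rw [hψ_def, Set.indicator_apply, Set.indicator_apply]
    have hcond : polarCoord.symm p ∈ {p : ℝ × ℝ | x ≤ p.1 ^ 2 + p.2 ^ 2} ↔ p.1 ∈ A := by
      rw [hA_def, mem_setOf_eq, mem_setOf_eq, habs]
    by_cases hmem : p.1 ∈ A
    · rw [if_pos (hcond.2 hmem), if_pos hmem]
      have hval : gaussianPDFReal 0 w.toNNReal (polarCoord.symm p).1
          * gaussianPDFReal 0 w.toNNReal (polarCoord.symm p).2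
          = c ^ 2 * rexp (-p.1 ^ 2 / (2 * w)) := by
        rw [hpdf, hpdf, mul_mul_mul_comm, ← Real.exp_add, sq c]
        congr 1
        rw [← habs]
        ring
      rw [hval, hg_def, smul_eq_mul]
    · rw [if_neg (fun h => hmem (hcond.1 h)), if_neg hmem, smul_zero]
  rw [setIntegral_congr_fun polarCoord.open_target.measurableSet fun p _ => hFeq p]
  rw [show polarCoord.target = Ioi (0:ℝ) ×ˢ Ioo (-π) π from rfl]
  have hg_int : IntegrableOn g (Ioi s) volume := radial_integrableOn w (c ^ 2) s hw (by positivity) hs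
  have hψ_int : Integrable ψ (volume.restrict (Ioi (0:ℝ))) := by
    rw [hψ_def, integrable_indicator_iff hA, IntegrableOn, Measure.restrict_restrict hA,
      Measure.restrict_congr_set (sqset_ae x hx)]
    exact hg_int
  have hint : IntegrableOn (fun p : ℝ × ℝ => ψ p.1) (Ioi (0:ℝ) ×ˢ Ioo (-π) π)
      (volume.prod volume) := by
    rw [IntegrableOn, ← Measure.prod_restrict]
    have hconst : Integrable (fun _ : ℝ => (1:ℝ)) (volume.restrict (Ioo (-π) π)) := by
      rw [← IntegrableOn]
      exact integrableOn_const measure_Ioo_lt_top.ne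
    have h1 := Integrable.mul_prod hψ_int hconst
    simpa using h1
  rw [Measure.volume_eq_prod, setIntegral_prod _ hint]
  have hinner : ∀ r : ℝ, ∫ _θ in Ioo (-π) π, ψ r = (π + π) * ψ r := by
    intro r
    rw [setIntegral_const, Real.volume_real_Ioo_of_le (by linarith), sub_neg_eq_add,
      smul_eq_mul]
  rw [integral_congr_ae (ae_of_all _ fun r => hinner r), MeasureTheory.integral_const_mul]
  have hIoi : ∫ r in Ioi (0:ℝ), ψ r = ∫ r in Ioi s, g r := by
    rw [hψ_def, integral_indicator hA, Measure.restrict_restrict hA,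
      Measure.restrict_congr_set (sqset_ae x hx)]
  rw [hIoi, radial_integral w (c ^ 2) s hw (by positivity) hs, hs_def, Real.sq_sqrt hx, hc_def,
    inv_pow]
  have h2 : Real.sqrt (2 * π * w) ^ 2 = 2 * π * w := Real.sq_sqrt (by positivity)
  rw [h2]
  field_simp
  ring

lemma gauss2_tail (w x : ℝ) (hw : 0 < w) (hx : 0 ≤ x) :
    ((gaussianReal 0 w.toNNReal).prod (gaussianReal 0 w.toNNReal))
        {p : ℝ × ℝ | x ≤ p.1 ^ 2 + p.2 ^ 2}
      = ENNReal.ofReal (rexp (-x / (2 * w))) := by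
  have hv' : w.toNNReal ≠ 0 := by
    simp only [ne_eq, Real.toNNReal_eq_zero, not_le]; exact hw
  haveI hprob : IsProbabilityMeasure (volume.withDensity (gaussianPDF 0 w.toNNReal)) := by
    rw [← gaussianReal_of_var_ne_zero 0 hv']; infer_instance
  have hS : MeasurableSet {p : ℝ × ℝ | x ≤ p.1 ^ 2 + p.2 ^ 2} :=
    measurableSet_le measurable_const (by fun_prop)
  rw [gaussianReal_of_var_ne_zero 0 hv',
    withDensity_prod volume volume (measurable_gaussianPDF _ _) (measurable_gaussianPDF _ _),
    withDensity_apply _ hS, ← Measure.volume_eq_prod]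
  have heq : ∀ p : ℝ × ℝ, gaussianPDF 0 w.toNNReal p.1 * gaussianPDF 0 w.toNNReal p.2
      = ENNReal.ofReal (gaussianPDFReal 0 w.toNNReal p.1 * gaussianPDFReal 0 w.toNNReal p.2) :=
    fun p => by rw [gaussianPDF, gaussianPDF,
      ← ENNReal.ofReal_mul (gaussianPDFReal_nonneg _ _ _)]
  rw [lintegral_congr heq]
  have hint : IntegrableOn
      (fun p : ℝ × ℝ => gaussianPDFReal 0 w.toNNReal p.1 * gaussianPDFReal 0 w.toNNReal p.2)
      {p : ℝ × ℝ | x ≤ p.1 ^ 2 + p.2 ^ 2} volume := by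
    refine Integrable.integrableOn ?_
    rw [Measure.volume_eq_prod]
    exact Integrable.mul_prod (integrable_gaussianPDFReal _ _) (integrable_gaussianPDFReal _ _)
  rw [← ofReal_integral_eq_lintegral_ofReal hint
    (ae_of_all _ fun p => mul_nonneg (gaussianPDFReal_nonneg _ _ _) (gaussianPDFReal_nonneg _ _ _)),
    integral_region w x hw hx]

/-! ### The density integral -/

lemma sinrDensity_nonneg {k c t : ℝ} (hc : 0 < c) (ht : 0 < t) : 0 ≤ sinrDensity k c t := by
  unfold sinrDensity
  have h1 : (0:ℝ) < 1 + k ^ 2 := by positivity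
  positivity

lemma hasDerivAt_G (k c : ℝ) (hc : 0 < c) {t : ℝ} (ht : 0 ≤ t) :
    HasDerivAt (G k c) (sinrDensity k c t) t := by
  have htc : (0:ℝ) < t + c := by linarith
  have hk1 : (0:ℝ) < 1 + k ^ 2 := by positivity
  have h1 : HasDerivAt (fun t : ℝ => t / (t + c))
      ((1 * (t + c) - t * 1) / (t + c) ^ 2) t :=
    (hasDerivAt_id t).div ((hasDerivAt_id t).add_const c) htc.ne'
  have h2 : HasDerivAt (fun t : ℝ => -(k ^ 2 * c / (t + c)))
      (-(k ^ 2 * c * (-1 / (t + c) ^ 2))) t := by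
    have hinv : HasDerivAt (fun t : ℝ => (t + c)⁻¹) (-1 / (t + c) ^ 2) t := by
      exact ((hasDerivAt_id t).add_const c).inv htc.ne'
    have := (hinv.const_mul (k ^ 2 * c)).neg
    have e : (fun t : ℝ => -(k ^ 2 * c / (t + c))) = fun y => -(k ^ 2 * c * (y + c)⁻¹) := by
      funext y; rw [div_eq_mul_inv]
    rw [e]; exact this
  have h3 := h2.exp
  have h := h1.mul h3
  refine h.congr_deriv ?_
  have hE : rexp (-k ^ 2) * rexp (t * k ^ 2 / (t + c)) = rexp (-(k ^ 2 * c / (t + c))) := by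
    rw [← Real.exp_add]
    congr 1
    field_simp
    ring
  unfold sinrDensity
  rw [show Real.exp (-k ^ 2) * (1 + k ^ 2) * c * Real.exp (t * k ^ 2 / (t + c))
      = (1 + k ^ 2) * c * (rexp (-k ^ 2) * rexp (t * k ^ 2 / (t + c))) by ring, hE]
  field_simp
  ring

lemma tendsto_G (k c : ℝ) (hc : 0 < c) : Tendsto (G k c) atTop (nhds 1) := by
  have h0 : Tendsto (fun t : ℝ => c / (t + c)) atTop (nhds 0) := by
    have := Tendsto.const_mul c
      (tendsto_inv_atTop_zero.comp (tendsto_atTop_add_const_right atTop c tendsto_id))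
    simpa [div_eq_mul_inv] using this
  have h1 : Tendsto (fun t : ℝ => t / (t + c)) atTop (nhds 1) := by
    have hcongr : ∀ᶠ t : ℝ in atTop, 1 - c / (t + c) = t / (t + c) := by
      filter_upwards [Filter.eventually_gt_atTop (-c + 1)] with t ht
      have : t + c ≠ 0 := by linarith
      field_simp
      ring
    refine Tendsto.congr' hcongr ?_
    simpa using tendsto_const_nhds.sub h0
  have h2 : Tendsto (fun t : ℝ => rexp (-(k ^ 2 * c / (t + c)))) atTop (nhds 1) := by
    have harg : Tendsto (fun t : ℝ => -(k ^ 2 * c / (t + c))) atTop (nhds 0) := by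
      have := ((h0.const_mul (k ^ 2)).neg)
      simpa [mul_div_assoc] using this
    have := (Real.continuous_exp.tendsto 0).comp harg
    rw [Real.exp_zero] at this; exact this
  have := h1.mul h2
  rw [one_mul] at this; exact this

lemma integrableOn_sinrDensity (k c a : ℝ) (hc : 0 < c) (ha : 0 ≤ a) :
    IntegrableOn (sinrDensity k c) (Ioi a) :=
  integrableOn_Ioi_deriv_of_nonneg'
    (fun t htmem => hasDerivAt_G k c hc (le_trans ha htmem))
    (fun t htmem => sinrDensity_nonneg hc (lt_of_le_of_lt ha htmem))
    (tendsto_G k c hc)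

lemma integral_sinrDensity (k c a : ℝ) (hc : 0 < c) (ha : 0 ≤ a) :
    ∫ t in Ioi a, sinrDensity k c t = 1 - G k c a :=
  integral_Ioi_of_hasDerivAt_of_nonneg'
    (fun t htmem => hasDerivAt_G k c hc (le_trans ha htmem))
    (fun t htmem => sinrDensity_nonneg hc (lt_of_le_of_lt ha htmem))
    (tendsto_G k c hc)

/-! ### Measure-level helpers -/

lemma gauss2_zeroset (m₁ m₂ : ℝ) (v₁ v₂ : ℝ≥0) (h₁ : v₁ ≠ 0) (h₂ : v₂ ≠ 0) :
    ((gaussianReal m₁ v₁).prod (gaussianReal m₂ v₂)) {p : ℝ × ℝ | p.1 ^ 2 + p.2 ^ 2 ≤ 0} = 0 := by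
  have hset : {p : ℝ × ℝ | p.1 ^ 2 + p.2 ^ 2 ≤ 0} = ({0} : Set ℝ) ×ˢ ({0} : Set ℝ) := by
    ext p
    simp only [mem_setOf_eq, mem_prod, mem_singleton_iff]
    constructor
    · intro h
      have h1 : p.1 ^ 2 = 0 := le_antisymm (by nlinarith [sq_nonneg p.2]) (sq_nonneg _)
      have h2 : p.2 ^ 2 = 0 := le_antisymm (by nlinarith [sq_nonneg p.1]) (sq_nonneg _)
      exact ⟨(pow_eq_zero_iff two_ne_zero).1 h1, (pow_eq_zero_iff two_ne_zero).1 h2⟩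
    · rintro ⟨h1, h2⟩
      rw [h1, h2]
      norm_num
  have hz : ∀ (m : ℝ) (v : ℝ≥0), v ≠ 0 → gaussianReal m v {0} = 0 := by
    intro m v hv
    rw [gaussianReal_apply m hv, setLIntegral_measure_zero _ _ (measure_singleton 0)]
  rw [hset, Measure.prod_prod, hz m₁ v₁ h₁, hz m₂ v₂ h₂, mul_zero]

lemma measure_Ioi_one {μ : Measure ℝ} [IsProbabilityMeasure μ] (h : μ (Iic 0) = 0) :
    μ (Ioi 0) = 1 := by
  rw [← compl_Iic, measure_compl measurableSet_Iic (measure_ne_top _ _), h, measure_univ,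
    tsub_zero]

lemma div_map_nonpos (μS μW : Measure ℝ) [IsProbabilityMeasure μS] [IsProbabilityMeasure μW]
    (hS0 : μS (Iic 0) = 0) (hW0 : μW (Iic 0) = 0) {a : ℝ} (ha : a ≤ 0) :
    Measure.map (fun p : ℝ × ℝ => p.1 / p.2) (μS.prod μW) (Ioi a) = 1 := by
  haveI : IsProbabilityMeasure (Measure.map (fun p : ℝ × ℝ => p.1 / p.2) (μS.prod μW)) :=
    Measure.isProbabilityMeasure_map (measurable_fst.div measurable_snd).aemeasurable
  refine le_antisymm prob_le_one ?_
  rw [Measure.map_apply (f := fun p : ℝ × ℝ => p.1 / p.2) (measurable_fst.div measurable_snd) measurableSet_Ioi]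
  have hsub : Ioi (0:ℝ) ×ˢ Ioi (0:ℝ) ⊆ (fun p : ℝ × ℝ => p.1 / p.2) ⁻¹' Ioi a := by
    rintro ⟨s, w⟩ ⟨hs, hw⟩
    exact lt_of_le_of_lt ha (div_pos hs hw)
  calc (1:ℝ≥0∞) = μS (Ioi 0) * μW (Ioi 0) := by
        rw [measure_Ioi_one hS0, measure_Ioi_one hW0, one_mul]
    _ = (μS.prod μW) (Ioi 0 ×ˢ Ioi 0) := (Measure.prod_prod _ _).symm
    _ ≤ _ := measure_mono hsub

lemma div_map_pos (μS μW : Measure ℝ) [IsProbabilityMeasure μS] [IsProbabilityMeasure μW]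
    (hS0 : μS (Iic 0) = 0) (hW0 : μW (Iic 0) = 0) {a : ℝ} (ha : 0 < a) :
    Measure.map (fun p : ℝ × ℝ => p.1 / p.2) (μS.prod μW) (Ioi a)
      = 1 - ∫⁻ s, μW (Ici (s / a)) ∂μS := by
  rw [Measure.map_apply (f := fun p : ℝ × ℝ => p.1 / p.2) (measurable_fst.div measurable_snd) measurableSet_Ioi]
  have hT : MeasurableSet ((fun p : ℝ × ℝ => p.1 / p.2) ⁻¹' Ioi a) :=
    (measurable_fst.div measurable_snd) measurableSet_Ioi
  rw [Measure.prod_apply hT]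
  have hslice : ∀ s : ℝ, μW (Prod.mk s ⁻¹' ((fun p : ℝ × ℝ => p.1 / p.2) ⁻¹' Ioi a))
      = 1 - μW (Ici (s / a)) := by
    intro s
    have h1 : Prod.mk s ⁻¹' ((fun p : ℝ × ℝ => p.1 / p.2) ⁻¹' Ioi a) = {w : ℝ | a < s / w} := rfl
    have h2 : μW {w : ℝ | a < s / w} = μW ({w : ℝ | a < s / w} ∩ Ioi 0) :=
      (measure_inter_conull (by rwa [compl_Ioi])).symm
    have h3 : {w : ℝ | a < s / w} ∩ Ioi 0 = Iio (s / a) ∩ Ioi 0 := by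
      ext w
      simp only [mem_inter_iff, mem_setOf_eq, mem_Iio, mem_Ioi, and_congr_left_iff]
      intro hw
      rw [lt_div_iff₀ hw, lt_div_iff₀ ha, mul_comm]
    have h4 : μW (Iio (s / a) ∩ Ioi 0) = μW (Iio (s / a)) :=
      measure_inter_conull (by rwa [compl_Ioi])
    rw [h1, h2, h3, h4, ← compl_Ici, measure_compl measurableSet_Ici (measure_ne_top _ _),
      measure_univ]
  rw [lintegral_congr hslice]
  have hmeas : Measurable (fun s : ℝ => μW (Ici (s / a))) := by
    have hanti : Antitone (fun u : ℝ => μW (Ici u)) := fun u u' huu' =>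
      measure_mono (Ici_subset_Ici.2 huu')
    exact hanti.measurable.comp (measurable_id.div_const a)
  have hle : ∀ s : ℝ, μW (Ici (s / a)) ≤ 1 := fun s => prob_le_one
  have hfin : ∫⁻ s, μW (Ici (s / a)) ∂μS ≠ ⊤ := by
    refine ne_top_of_le_ne_top (by simp : (1:ℝ≥0∞) ≠ ⊤) ?_
    calc ∫⁻ s, μW (Ici (s / a)) ∂μS ≤ ∫⁻ _, 1 ∂μS := lintegral_mono hle
      _ = 1 := by simp
  rw [lintegral_sub hmeas hfin (ae_of_all _ hle), lintegral_one, measure_univ]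

end SinrAux


/-- Lemma of the paper's Appendix C: the SINR, i.e. the ratio of the squared modulus of a
complex Gaussian with mean `μ₁ + i μ₂` and total variance `σs²` to the squared modulus of
an independent zero-mean complex Gaussian with total variance `σI²`, has density
`sinrDensity k c` on `(0, ∞)`, where `k = √(μ₁² + μ₂²)/σs` and `c = σs²/σI²`. -/
theorem sinr_distribution
    {Ω : Type*} [MeasurableSpace Ω] (P : Measure Ω) [IsProbabilityMeasure P]
    (σs σI μ₁ μ₂ : ℝ) (hσs : 0 < σs) (hσI : 0 < σI)
    (X₁ X₂ Y₁ Y₂ : Ω → ℝ)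
    (hIndep : iIndepFun ![X₁, X₂, Y₁, Y₂] P)
    (hX₁ : Measure.map X₁ P = gaussianReal μ₁ (Real.toNNReal (σs ^ 2 / 2)))
    (hX₂ : Measure.map X₂ P = gaussianReal μ₂ (Real.toNNReal (σs ^ 2 / 2)))
    (hY₁ : Measure.map Y₁ P = gaussianReal 0 (Real.toNNReal (σI ^ 2 / 2)))
    (hY₂ : Measure.map Y₂ P = gaussianReal 0 (Real.toNNReal (σI ^ 2 / 2))) :
    Measure.map (fun ω => (X₁ ω ^ 2 + X₂ ω ^ 2) / (Y₁ ω ^ 2 + Y₂ ω ^ 2)) P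
      = volume.withDensity fun η => ENNReal.ofReal
          (if 0 < η then sinrDensity (Real.sqrt (μ₁ ^ 2 + μ₂ ^ 2) / σs) (σs ^ 2 / σI ^ 2) η
           else 0) := by
  have hσs2 : (0:ℝ) < σs ^ 2 / 2 := by positivity
  have hσI2 : (0:ℝ) < σI ^ 2 / 2 := by positivity
  have hvs_ne : (σs ^ 2 / 2).toNNReal ≠ 0 := by
    simp only [ne_eq, Real.toNNReal_eq_zero, not_le]; exact hσs2
  have hvI_ne : (σI ^ 2 / 2).toNNReal ≠ 0 := by
    simp only [ne_eq, Real.toNNReal_eq_zero, not_le]; exact hσI2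
  set k : ℝ := Real.sqrt (μ₁ ^ 2 + μ₂ ^ 2) / σs with hk_def
  set c : ℝ := σs ^ 2 / σI ^ 2 with hc_def
  have hc : 0 < c := by rw [hc_def]; positivity
  have hk2 : k ^ 2 = (μ₁ ^ 2 + μ₂ ^ 2) / σs ^ 2 := by
    rw [hk_def, div_pow, Real.sq_sqrt (by positivity)]
  -- a.e.-measurability of the four random variables
  have hae : ∀ (f : Ω → ℝ) (m : ℝ) (v : ℝ≥0),
      Measure.map f P = gaussianReal m v → AEMeasurable f P := by
    intro f m v hmap
    by_contra h
    rw [Measure.map_of_not_aemeasurable h] at hmap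
    exact IsProbabilityMeasure.ne_zero (gaussianReal m v) hmap.symm
  have hX₁ae := hae _ _ _ hX₁
  have hX₂ae := hae _ _ _ hX₂
  have hY₁ae := hae _ _ _ hY₁
  have hY₂ae := hae _ _ _ hY₂
  -- measurable modifications
  set X₁' : Ω → ℝ := hX₁ae.mk X₁ with hX₁'_def
  set X₂' : Ω → ℝ := hX₂ae.mk X₂ with hX₂'_def
  set Y₁' : Ω → ℝ := hY₁ae.mk Y₁ with hY₁'_def
  set Y₂' : Ω → ℝ := hY₂ae.mk Y₂ with hY₂'_def
  have hmX₁ : Measurable X₁' := hX₁ae.measurable_mk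
  have hmX₂ : Measurable X₂' := hX₂ae.measurable_mk
  have hmY₁ : Measurable Y₁' := hY₁ae.measurable_mk
  have hmY₂ : Measurable Y₂' := hY₂ae.measurable_mk
  set F : Fin 4 → Ω → ℝ := ![X₁', X₂', Y₁', Y₂'] with hF_def
  have hFmeas : ∀ i, Measurable (F i) := by
    intro i
    fin_cases i
    · exact hmX₁
    · exact hmX₂
    · exact hmY₁
    · exact hmY₂
  have hFae : ∀ i, (![X₁, X₂, Y₁, Y₂] : Fin 4 → Ω → ℝ) i =ᵐ[P] F i := by
    intro i
    fin_cases i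
    · exact hX₁ae.ae_eq_mk
    · exact hX₂ae.ae_eq_mk
    · exact hY₁ae.ae_eq_mk
    · exact hY₂ae.ae_eq_mk
  have hIndep' : iIndepFun F P := SinrAux.iIndepFun_congr hIndep hFae
  -- laws of the modifications
  have hX₁' : Measure.map X₁' P = gaussianReal μ₁ (σs ^ 2 / 2).toNNReal :=
    (Measure.map_congr hX₁ae.ae_eq_mk).symm.trans hX₁
  have hX₂' : Measure.map X₂' P = gaussianReal μ₂ (σs ^ 2 / 2).toNNReal :=
    (Measure.map_congr hX₂ae.ae_eq_mk).symm.trans hX₂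
  have hY₁' : Measure.map Y₁' P = gaussianReal 0 (σI ^ 2 / 2).toNNReal :=
    (Measure.map_congr hY₁ae.ae_eq_mk).symm.trans hY₁
  have hY₂' : Measure.map Y₂' P = gaussianReal 0 (σI ^ 2 / 2).toNNReal :=
    (Measure.map_congr hY₂ae.ae_eq_mk).symm.trans hY₂
  -- joint laws of the pairs
  have hpairX : Measure.map (fun ω => (X₁' ω, X₂' ω)) P
      = (gaussianReal μ₁ (σs ^ 2 / 2).toNNReal).prod (gaussianReal μ₂ (σs ^ 2 / 2).toNNReal) := by
    have h01 : IndepFun X₁' X₂' P := hIndep'.indepFun (show (0 : Fin 4) ≠ 1 by decide)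
    have h := (indepFun_iff_map_prod_eq_prod_map_map hmX₁.aemeasurable hmX₂.aemeasurable).1 h01
    rw [hX₁', hX₂'] at h
    exact h
  have hpairY : Measure.map (fun ω => (Y₁' ω, Y₂' ω)) P
      = (gaussianReal 0 (σI ^ 2 / 2).toNNReal).prod (gaussianReal 0 (σI ^ 2 / 2).toNNReal) := by
    have h23 : IndepFun Y₁' Y₂' P := hIndep'.indepFun (show (2 : Fin 4) ≠ 3 by decide)
    have h := (indepFun_iff_map_prod_eq_prod_map_map hmY₁.aemeasurable hmY₂.aemeasurable).1 h23
    rw [hY₁', hY₂'] at h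
    exact h
  set φ : ℝ × ℝ → ℝ := fun p => p.1 ^ 2 + p.2 ^ 2 with hφ_def
  have hφm : Measurable φ := by
    rw [hφ_def]; fun_prop
  set μS : Measure ℝ := Measure.map φ
    ((gaussianReal μ₁ (σs ^ 2 / 2).toNNReal).prod (gaussianReal μ₂ (σs ^ 2 / 2).toNNReal))
    with hμS_def
  set μW : Measure ℝ := Measure.map φ
    ((gaussianReal 0 (σI ^ 2 / 2).toNNReal).prod (gaussianReal 0 (σI ^ 2 / 2).toNNReal))
    with hμW_def
  haveI hμSP : IsProbabilityMeasure μS := by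
    rw [hμS_def]; exact Measure.isProbabilityMeasure_map hφm.aemeasurable
  haveI hμWP : IsProbabilityMeasure μW := by
    rw [hμW_def]; exact Measure.isProbabilityMeasure_map hφm.aemeasurable
  have hS_law : Measure.map (fun ω => X₁' ω ^ 2 + X₂' ω ^ 2) P = μS := by
    rw [hμS_def, ← hpairX, Measure.map_map hφm (hmX₁.prodMk hmX₂)]
    rfl
  have hW_law : Measure.map (fun ω => Y₁' ω ^ 2 + Y₂' ω ^ 2) P = μW := by
    rw [hμW_def, ← hpairY, Measure.map_map hφm (hmY₁.prodMk hmY₂)]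
    rfl
  have hSmeas : Measurable (fun ω => X₁' ω ^ 2 + X₂' ω ^ 2) := by fun_prop
  have hWmeas : Measurable (fun ω => Y₁' ω ^ 2 + Y₂' ω ^ 2) := by fun_prop
  have hSW : IndepFun (fun ω => X₁' ω ^ 2 + X₂' ω ^ 2) (fun ω => Y₁' ω ^ 2 + Y₂' ω ^ 2) P := by
    have h := hIndep'.indepFun_prodMk_prodMk hFmeas 0 1 2 3
      (by decide) (by decide) (by decide) (by decide)
    exact h.comp hφm hφm
  -- main reduction
  have hmain : Measure.map (fun ω => (X₁ ω ^ 2 + X₂ ω ^ 2) / (Y₁ ω ^ 2 + Y₂ ω ^ 2)) P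
      = Measure.map (fun p : ℝ × ℝ => p.1 / p.2) (μS.prod μW) := by
    have haeq : (fun ω => (X₁ ω ^ 2 + X₂ ω ^ 2) / (Y₁ ω ^ 2 + Y₂ ω ^ 2))
        =ᵐ[P] fun ω => (X₁' ω ^ 2 + X₂' ω ^ 2) / (Y₁' ω ^ 2 + Y₂' ω ^ 2) := by
      filter_upwards [hX₁ae.ae_eq_mk, hX₂ae.ae_eq_mk, hY₁ae.ae_eq_mk, hY₂ae.ae_eq_mk]
        with ω h1 h2 h3 h4
      rw [h1, h2, h3, h4]
    rw [Measure.map_congr haeq]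
    have hcomp : (fun ω => (X₁' ω ^ 2 + X₂' ω ^ 2) / (Y₁' ω ^ 2 + Y₂' ω ^ 2))
        = (fun p : ℝ × ℝ => p.1 / p.2)
          ∘ (fun ω => (X₁' ω ^ 2 + X₂' ω ^ 2, Y₁' ω ^ 2 + Y₂' ω ^ 2)) := rfl
    rw [hcomp, ← Measure.map_map (g := fun p : ℝ × ℝ => p.1 / p.2) (measurable_fst.div measurable_snd) (hSmeas.prodMk hWmeas)]
    congr 1
    rw [← hS_law, ← hW_law]
    exact (indepFun_iff_map_prod_eq_prod_map_map hSmeas.aemeasurable hWmeas.aemeasurable).1 hSW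
  rw [hmain]
  -- supports
  have hS0 : μS (Iic 0) = 0 := by
    rw [hμS_def, Measure.map_apply hφm measurableSet_Iic]
    exact SinrAux.gauss2_zeroset _ _ _ _ hvs_ne hvs_ne
  have hW0 : μW (Iic 0) = 0 := by
    rw [hμW_def, Measure.map_apply hφm measurableSet_Iic]
    exact SinrAux.gauss2_zeroset _ _ _ _ hvI_ne hvI_ne
  have hWtail : ∀ x : ℝ, 0 ≤ x →
      μW (Ici x) = ENNReal.ofReal (rexp (-x / (2 * (σI ^ 2 / 2)))) := by
    intro x hx
    rw [hμW_def, Measure.map_apply hφm measurableSet_Ici]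
    exact SinrAux.gauss2_tail (σI ^ 2 / 2) x (by positivity) hx
  -- the density-side values
  set ν : Measure ℝ := volume.withDensity fun η => ENNReal.ofReal
      (if 0 < η then sinrDensity k c η else 0) with hν_def
  have hν : ∀ a : ℝ, 0 ≤ a → ν (Ioi a) = ENNReal.ofReal (1 - SinrAux.G k c a) := by
    intro a ha0
    rw [hν_def, withDensity_apply _ measurableSet_Ioi,
      setLIntegral_congr_fun measurableSet_Ioi (
        (fun t ht => by rw [if_pos (lt_of_le_of_lt ha0 ht)] :
          ∀ t ∈ Ioi a, ENNReal.ofReal (if 0 < t then sinrDensity k c t else 0)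
            = ENNReal.ofReal (sinrDensity k c t))),
      ← ofReal_integral_eq_lintegral_ofReal (SinrAux.integrableOn_sinrDensity k c a hc ha0)
        ((ae_restrict_iff' measurableSet_Ioi).2 (ae_of_all _
          fun t ht => SinrAux.sinrDensity_nonneg hc (lt_of_le_of_lt ha0 ht))),
      SinrAux.integral_sinrDensity k c a hc ha0]
  have hG0val : SinrAux.G k c 0 = 0 := by
    unfold SinrAux.G
    rw [zero_div, zero_mul]
  have hν0 : ν (Iic 0) = 0 := by
    rw [hν_def, withDensity_apply _ measurableSet_Iic,
      setLIntegral_congr_fun measurableSet_Iic (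
        (fun t ht => by rw [if_neg (not_lt.2 ht), ENNReal.ofReal_zero] :
          ∀ t ∈ Iic (0:ℝ), ENNReal.ofReal (if 0 < t then sinrDensity k c t else 0) = 0)),
      lintegral_zero]
  have hνIoi0 : ν (Ioi 0) = 1 := by
    rw [hν 0 le_rfl, hG0val, sub_zero, ENNReal.ofReal_one]
  haveI : IsProbabilityMeasure (Measure.map (fun p : ℝ × ℝ => p.1 / p.2) (μS.prod μW)) :=
    Measure.isProbabilityMeasure_map (measurable_fst.div measurable_snd).aemeasurable
  -- extensionality over Ioi sets
  refine MeasureTheory.ext_of_generate_finite (Set.range Set.Ioi)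
    (BorelSpace.measurable_eq.trans (borel_eq_generateFrom_Ioi ℝ)) isPiSystem_Ioi ?_ ?_
  · rintro s ⟨a, rfl⟩
    by_cases ha : 0 < a
    · -- main case
      rw [SinrAux.div_map_pos μS μW hS0 hW0 ha, hν a ha.le]
      set l : ℝ := (a * σI ^ 2)⁻¹ with hl_def
      have hl : 0 < l := by rw [hl_def]; positivity
      have haeS : ∀ᵐ s ∂μS, 0 < s := by
        rw [ae_iff]
        have hset : {s : ℝ | ¬ 0 < s} = Iic 0 := by ext s; simp [not_lt]
        rw [hset]
        exact hS0
      have hstep1 : ∫⁻ s, μW (Ici (s / a)) ∂μS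
          = ∫⁻ s, ENNReal.ofReal (rexp (-(l * s))) ∂μS := by
        refine lintegral_congr_ae (haeS.mono fun s hs => ?_)
        show μW (Ici (s / a)) = ENNReal.ofReal (rexp (-(l * s)))
        rw [hWtail (s / a) (by positivity)]
        congr 1
        rw [hl_def]
        field_simp
      have hstep2 : ∫⁻ s, ENNReal.ofReal (rexp (-(l * s))) ∂μS
          = ENNReal.ofReal (((Real.sqrt (1 + 2 * l * (σs ^ 2 / 2)))⁻¹
              * rexp (-(l * μ₁ ^ 2 / (1 + 2 * l * (σs ^ 2 / 2)))))
            * ((Real.sqrt (1 + 2 * l * (σs ^ 2 / 2)))⁻¹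
              * rexp (-(l * μ₂ ^ 2 / (1 + 2 * l * (σs ^ 2 / 2)))))) := by
        rw [hμS_def, lintegral_map (by fun_prop) hφm]
        have hpt : ∀ p : ℝ × ℝ, ENNReal.ofReal (rexp (-(l * φ p)))
            = ENNReal.ofReal (rexp (-(l * p.1 ^ 2))) * ENNReal.ofReal (rexp (-(l * p.2 ^ 2))) := by
          intro p
          rw [← ENNReal.ofReal_mul (Real.exp_pos _).le, ← Real.exp_add, hφ_def]
          congr 2
          ring
        rw [lintegral_congr hpt,
          lintegral_prod_mul (by fun_prop : Measurable fun x : ℝ =>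
              ENNReal.ofReal (rexp (-(l * x ^ 2)))).aemeasurable
            (by fun_prop : Measurable fun x : ℝ =>
              ENNReal.ofReal (rexp (-(l * x ^ 2)))).aemeasurable,
          SinrAux.lintegral_exp_gaussian μ₁ (σs ^ 2 / 2) l hσs2 hl,
          SinrAux.lintegral_exp_gaussian μ₂ (σs ^ 2 / 2) l hσs2 hl,
          ← ENNReal.ofReal_mul (by positivity)]
      have hGval : ((Real.sqrt (1 + 2 * l * (σs ^ 2 / 2)))⁻¹
              * rexp (-(l * μ₁ ^ 2 / (1 + 2 * l * (σs ^ 2 / 2)))))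
            * ((Real.sqrt (1 + 2 * l * (σs ^ 2 / 2)))⁻¹
              * rexp (-(l * μ₂ ^ 2 / (1 + 2 * l * (σs ^ 2 / 2)))))
          = SinrAux.G k c a := by
        have hu_pos : (0:ℝ) < 1 + 2 * l * (σs ^ 2 / 2) := by positivity
        have hu_val : 1 + 2 * l * (σs ^ 2 / 2) = (a + c) / a := by
          rw [hl_def, hc_def]
          field_simp
        rw [mul_mul_mul_comm, ← Real.exp_add, ← mul_inv,
          Real.mul_self_sqrt hu_pos.le]
        unfold SinrAux.G
        have hac : (0:ℝ) < a + c := by positivity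
        congr 1
        · rw [hu_val, inv_div]
        · rw [hu_val, hl_def, hk2, hc_def]
          field_simp
          ring
      have hG0 : 0 ≤ SinrAux.G k c a := by
        unfold SinrAux.G
        have hac : (0:ℝ) < a + c := by positivity
        positivity
      have hG1 : SinrAux.G k c a ≤ 1 := by
        unfold SinrAux.G
        have hac : (0:ℝ) < a + c := by positivity
        refine mul_le_one₀ ?_ (Real.exp_pos _).le ?_
        · rw [div_le_one hac]; linarith
        · exact Real.exp_le_one_iff.2 (neg_nonpos.2 (by positivity))
      rw [hstep1, hstep2, hGval, ← ENNReal.ofReal_one, ← ENNReal.ofReal_sub _ hG0]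
    · push_neg at ha
      rw [SinrAux.div_map_nonpos μS μW hS0 hW0 ha]
      rcases ha.lt_or_eq with hlt | rfl
      · rw [← Set.Ioc_union_Ioi_eq_Ioi hlt.le,
          measure_union (Set.Ioc_disjoint_Ioi le_rfl) measurableSet_Ioi,
          measure_mono_null Set.Ioc_subset_Iic_self hν0, zero_add, hνIoi0]
      · rw [hνIoi0]
  · rw [measure_univ, ← Set.Iic_union_Ioi (a := (0:ℝ)),
      measure_union (Set.Iic_disjoint_Ioi le_rfl) measurableSet_Ioi, hν0, zero_add, hνIoi0]
end

section
/- For every real number a > 0, ∫₀¹ z (ln z) e^{−a z} dz = (1 − e^{−a})/a² − (1/a²)·(E₁(a) + ln a + γ_EM). (This is the evaluation of the integral appearing in I₂₂, equation (26), in the proof of the paper's Theorem 1, obtained by integration by parts.) -/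
open MeasureTheory Real

open Set Filter Topology

/-- The exponential integral `E₁(x) = ∫ₓ^∞ e^{-t}/t dt`. -/
noncomputable def expIntegralE1 (x : ℝ) : ℝ := ∫ t in Set.Ioi x, Real.exp (-t) / t

private lemma L1 : ∫ t in Ioi (0:ℝ), Real.log t * Real.exp (-t) = -Real.eulerMascheroniConstant := by
  have h1 := Complex.hasDerivAt_GammaIntegral (s := 1) (by norm_num)
  have hD : (∫ t : ℝ in Ioi 0, (t:ℂ) ^ ((1:ℂ) - 1) * (Real.log t * Real.exp (-t)))
      = ((∫ t in Ioi (0:ℝ), Real.log t * Real.exp (-t) : ℝ) : ℂ) := by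
    have e1 : (∫ t : ℝ in Ioi 0, (t:ℂ) ^ ((1:ℂ) - 1) * (Real.log t * Real.exp (-t)))
        = ∫ t : ℝ in Ioi 0, ((Real.log t * Real.exp (-t) : ℝ) : ℂ) := by
      refine setIntegral_congr_fun measurableSet_Ioi (fun t ht => ?_)
      simp
    rw [e1]
    exact integral_ofReal
  rw [hD] at h1
  have h2 : HasDerivAt Complex.Gamma
      ((∫ t in Ioi (0:ℝ), Real.log t * Real.exp (-t) : ℝ) : ℂ) 1 := by
    refine h1.congr_of_eventuallyEq ?_
    filter_upwards [Complex.continuous_re.isOpen_preimage _ isOpen_Ioi |>.mem_nhds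
      (by norm_num : (1:ℂ) ∈ Complex.re ⁻¹' Ioi (0:ℝ))] with s hs
    exact Complex.Gamma_eq_integral hs
  have h3 : HasDerivAt Real.Gamma (∫ t in Ioi (0:ℝ), Real.log t * Real.exp (-t)) 1 := by
    have := h2.real_of_complex
    rw [Complex.ofReal_re] at this
    exact this
  have := h3.unique Real.hasDerivAt_Gamma_one
  linarith

private lemma L2a (a : ℝ) (ha : 0 < a) :
    IntegrableOn (fun t => Real.log t * Real.exp (-(a*t))) (Ioc 0 1) := by
  have hmaj : IntegrableOn (fun t : ℝ => 2 * t ^ (-(2:ℝ)⁻¹)) (Ioc 0 1) := by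
    have := (intervalIntegral.intervalIntegrable_rpow' (a := 0) (b := 1)
      (r := -(2:ℝ)⁻¹) (by norm_num)).1
    exact this.const_mul 2
  refine Integrable.mono hmaj ?_ ?_
  · exact ((measurable_log.mul (by fun_prop)).aestronglyMeasurable).restrict
  · filter_upwards [ae_restrict_mem measurableSet_Ioc] with t ht
    have ht0 : 0 < t := ht.1
    have ht1 : t ≤ 1 := ht.2
    have hexp : Real.exp (-(a*t)) ≤ 1 := by
      rw [exp_le_one_iff]; nlinarith
    have hlog : -Real.log t ≤ 2 * t ^ (-(2:ℝ)⁻¹) := by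
      have hs : 0 < Real.sqrt t := Real.sqrt_pos.mpr ht0
      have h1 : Real.log (Real.sqrt t)⁻¹ ≤ (Real.sqrt t)⁻¹ - 1 :=
        Real.log_le_sub_one_of_pos (by positivity)
      have h2 : Real.log (Real.sqrt t) = Real.log t / 2 := Real.log_sqrt ht0.le
      rw [Real.log_inv, h2] at h1
      have h3 : (Real.sqrt t)⁻¹ = t ^ (-(2:ℝ)⁻¹) := by
        rw [Real.sqrt_eq_rpow, ← Real.rpow_neg ht0.le]
        norm_num
      rw [← h3]
      linarith
    have hle : |Real.log t| = -Real.log t := by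
      rw [abs_of_nonpos (Real.log_nonpos ht0.le ht1)]
    rw [Real.norm_eq_abs, abs_mul, hle, Real.abs_exp, Real.norm_eq_abs]
    calc -Real.log t * Real.exp (-(a*t)) ≤ -Real.log t * 1 := by
          apply mul_le_mul_of_nonneg_left hexp
          simpa using Real.log_nonpos ht0.le ht1
      _ ≤ 2 * t ^ (-(2:ℝ)⁻¹) := by simpa using hlog
      _ ≤ |2 * t ^ (-(2:ℝ)⁻¹)| := le_abs_self _

private lemma L2b (a : ℝ) (ha : 0 < a) :
    IntegrableOn (fun t => Real.log t * Real.exp (-(a*t))) (Ioi 1) := by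
  have hmaj : IntegrableOn (fun t : ℝ => t * Real.exp (-(a*t))) (Ioi 1) := by
    have h := integrableOn_rpow_mul_exp_neg_mul_rpow (p := 1) (s := 1) (b := a)
      (by norm_num) zero_lt_one ha
    have h2 : IntegrableOn (fun t : ℝ => t * Real.exp (-(a*t))) (Ioi 0) := by
      refine h.congr_fun (fun x hx => ?_) measurableSet_Ioi
      simp [Real.rpow_one, neg_mul]
    exact h2.mono_set (Ioi_subset_Ioi zero_le_one)
  refine Integrable.mono hmaj ?_ ?_
  · exact ((measurable_log.mul (by fun_prop)).aestronglyMeasurable).restrict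
  · filter_upwards [ae_restrict_mem measurableSet_Ioi] with t ht
    have ht1 : (1:ℝ) < t := ht
    have hlog : |Real.log t| ≤ t := by
      rw [abs_of_nonneg (Real.log_nonneg ht1.le)]
      linarith [Real.log_le_sub_one_of_pos (by linarith : (0:ℝ) < t)]
    rw [Real.norm_eq_abs, Real.norm_eq_abs, abs_mul, Real.abs_exp,
      abs_of_nonneg (by positivity : (0:ℝ) ≤ t * Real.exp (-(a*t)))]
    exact mul_le_mul_of_nonneg_right hlog (Real.exp_nonneg _)

private lemma L2 (a : ℝ) (ha : 0 < a) :
    IntegrableOn (fun t => Real.log t * Real.exp (-(a*t))) (Ioi 0) := by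
  rw [← Ioc_union_Ioi_eq_Ioi (zero_le_one' ℝ)]
  exact (L2a a ha).union (L2b a ha)

private lemma Lexp (a : ℝ) (ha : 0 < a) :
    ∫ t in Ioi (0:ℝ), Real.exp (-(a*t)) = a⁻¹ := by
  have h := integral_comp_mul_left_Ioi (fun u => Real.exp (-u)) 0 ha
  simp only [mul_zero] at h
  rw [h, integral_exp_neg_Ioi_zero, smul_eq_mul, mul_one]

lemma L3 (a : ℝ) (ha : 0 < a) :
    ∫ t in Ioi (0:ℝ), Real.log t * Real.exp (-(a*t))
      = (-Real.eulerMascheroniConstant - Real.log a) / a := by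
  have h := integral_comp_mul_left_Ioi (fun u => Real.log u * Real.exp (-u)) 0 ha
  simp only [mul_zero] at h
  rw [L1, smul_eq_mul] at h
  have hsplit : ∫ t in Ioi (0:ℝ), Real.log (a*t) * Real.exp (-(a*t))
      = (∫ t in Ioi (0:ℝ), Real.log a * Real.exp (-(a*t)))
        + ∫ t in Ioi (0:ℝ), Real.log t * Real.exp (-(a*t)) := by
    have hexpint : IntegrableOn (fun t : ℝ => Real.exp (-(a*t))) (Ioi 0) := by
      simpa [neg_mul] using exp_neg_integrableOn_Ioi 0 ha
    rw [← integral_add (hexpint.const_mul _) (L2 a ha)]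
    refine setIntegral_congr_fun measurableSet_Ioi (fun t ht => ?_)
    rw [Real.log_mul ha.ne' (ne_of_gt ht), add_mul]
  rw [hsplit] at h
  rw [integral_const_mul, Lexp a ha] at h
  have : (∫ t in Ioi (0:ℝ), Real.log t * Real.exp (-(a*t)))
      = a⁻¹ * -Real.eulerMascheroniConstant - Real.log a * a⁻¹ := by linarith
  rw [this]; field_simp

private lemma L4 (a : ℝ) (ha : 0 < a) :
    expIntegralE1 a = ∫ u in Ioi (1:ℝ), Real.exp (-(a*u)) / u := by
  have h := integral_comp_mul_left_Ioi (fun t => Real.exp (-t) / t) 1 ha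
  simp only [mul_one, smul_eq_mul] at h
  have h2 : ∫ x in Ioi (1:ℝ), Real.exp (-(a*x)) / (a*x)
      = a⁻¹ * ∫ x in Ioi (1:ℝ), Real.exp (-(a*x)) / x := by
    rw [← integral_const_mul]
    refine setIntegral_congr_fun measurableSet_Ioi (fun t ht => ?_)
    field_simp
  rw [h2] at h
  have := mul_left_cancel₀ (inv_ne_zero ha.ne') h
  rw [expIntegralE1, this]

lemma hexpint1 (a : ℝ) (ha : 0 < a) :
    IntegrableOn (fun t : ℝ => Real.exp (-(a*t))) (Ioi 1) := by
  simpa [neg_mul] using exp_neg_integrableOn_Ioi 1 ha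

lemma Lquot (a : ℝ) (ha : 0 < a) :
    IntegrableOn (fun t : ℝ => Real.exp (-(a*t)) / (a*t)) (Ioi 1) := by
  refine Integrable.mono ((hexpint1 a ha).const_mul a⁻¹) ?_ ?_
  · apply Measurable.aestronglyMeasurable
    fun_prop
  · filter_upwards [ae_restrict_mem measurableSet_Ioi] with t ht
    have ht1 : (1:ℝ) < t := ht
    rw [Real.norm_eq_abs, Real.norm_eq_abs]
    rw [abs_of_nonneg (by positivity), abs_of_nonneg (by positivity)]
    rw [div_le_iff₀ (by positivity)]
    rw [mul_comm a⁻¹, mul_assoc]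
    refine le_mul_of_one_le_right (Real.exp_nonneg _) ?_
    rw [← mul_assoc, inv_mul_cancel₀ ha.ne', one_mul]
    exact ht1.le

lemma L5 (a : ℝ) (ha : 0 < a) :
    ∫ t in Ioi (1:ℝ), Real.log t * Real.exp (-(a*t)) = expIntegralE1 a / a := by
  set f : ℝ → ℝ := fun t => -(1/a) * (Real.exp (-(a*t)) * Real.log t) with hf
  set f' : ℝ → ℝ := fun t => Real.log t * Real.exp (-(a*t)) - Real.exp (-(a*t)) / (a*t) with hf'
  have hderiv : ∀ t ∈ Ioi (1:ℝ), HasDerivAt f (f' t) t := by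
    intro t ht
    have ht0 : 0 < t := lt_trans zero_lt_one ht
    have h1 : HasDerivAt (fun t : ℝ => Real.exp (-(a*t))) (-a * Real.exp (-(a*t))) t := by
      have := (Real.hasDerivAt_exp (-(a*t))).comp t (((hasDerivAt_id t).const_mul a).neg)
      simpa [mul_comm, Function.comp_def, Pi.neg_apply] using this
    have h2 : HasDerivAt Real.log t⁻¹ t := Real.hasDerivAt_log ht0.ne'
    have h3 := (h1.mul h2).const_mul (-(1/a))
    have h4 : f' t = -(1/a) * (-a * Real.exp (-(a*t)) * Real.log t + Real.exp (-(a*t)) * t⁻¹) := by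
      rw [hf']
      field_simp
      ring
    rw [h4]
    exact h3
  have hcont : ContinuousWithinAt f (Ici 1) 1 := by
    have : ContinuousAt f 1 := by
      exact (ContinuousAt.mul (Continuous.continuousAt (by fun_prop))
        (Real.continuousAt_log one_ne_zero)).const_mul _
    exact this.continuousWithinAt
  have hint : IntegrableOn f' (Ioi 1) := (L2b a ha).sub (Lquot a ha)
  have htend : Tendsto f atTop (𝓝 0) := by
    rw [show (0:ℝ) = -(1/a) * 0 by ring]
    refine Tendsto.const_mul _ ?_
    have := tendsto_rpow_mul_exp_neg_mul_atTop_nhds_zero 1 a ha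
    refine squeeze_zero_norm' ?_ (by simpa [neg_mul] using this.norm)
    filter_upwards [eventually_ge_atTop (1:ℝ)] with t ht
    have hlog : |Real.log t| ≤ t := by
      rw [abs_of_nonneg (Real.log_nonneg ht)]
      linarith [Real.log_le_sub_one_of_pos (by linarith : (0:ℝ) < t)]
    rw [Real.norm_eq_abs, abs_mul, Real.abs_exp, abs_of_nonneg (by linarith : (0:ℝ) ≤ t), mul_comm]
    exact mul_le_mul_of_nonneg_right hlog (Real.exp_nonneg _)
  have key := integral_Ioi_of_hasDerivAt_of_tendsto hcont hderiv hint htend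
  have hf1 : f 1 = 0 := by simp [hf]
  rw [hf1, sub_zero] at key
  have split : ∫ t in Ioi (1:ℝ), f' t
      = (∫ t in Ioi (1:ℝ), Real.log t * Real.exp (-(a*t)))
        - ∫ t in Ioi (1:ℝ), Real.exp (-(a*t)) / (a*t) :=
    integral_sub (L2b a ha) (Lquot a ha)
  have hq : ∫ t in Ioi (1:ℝ), Real.exp (-(a*t)) / (a*t) = expIntegralE1 a / a := by
    rw [L4 a ha, ← integral_div]
    refine setIntegral_congr_fun measurableSet_Ioi (fun t ht => ?_)
    rw [div_div, mul_comm]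
  rw [key, hq] at split
  linarith

private lemma L6 (a : ℝ) (ha : 0 < a) :
    ∫ z in (0:ℝ)..1, Real.log z * Real.exp (-(a*z))
      = (-Real.eulerMascheroniConstant - Real.log a) / a - expIntegralE1 a / a := by
  have hsplit : ∫ t in Ioi (0:ℝ), Real.log t * Real.exp (-(a*t))
      = (∫ t in Ioc (0:ℝ) 1, Real.log t * Real.exp (-(a*t)))
        + ∫ t in Ioi (1:ℝ), Real.log t * Real.exp (-(a*t)) := by
    rw [← Ioc_union_Ioi_eq_Ioi (zero_le_one' ℝ)]
    exact setIntegral_union (Ioc_disjoint_Ioi le_rfl) measurableSet_Ioi (L2a a ha) (L2b a ha)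
  rw [intervalIntegral.integral_of_le zero_le_one]
  rw [L3 a ha, L5 a ha] at hsplit
  linarith

/-- Evaluation of the integral appearing in `I₂₂`, equation (26), in the proof of the
paper's Theorem 1. -/
theorem integral_I22 (a : ℝ) (ha : 0 < a) :
    ∫ z in (0 : ℝ)..1, z * Real.log z * Real.exp (-a * z)
      = (1 - Real.exp (-a)) / a ^ 2
        - (1 / a ^ 2) * (expIntegralE1 a + Real.log a + Real.eulerMascheroniConstant) := by
  set F : ℝ → ℝ := fun z => -(1/a) * (z * Real.log z * Real.exp (-(a*z))) with hF
  have hFderiv : ∀ z ∈ Ioo (0:ℝ) 1,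
      HasDerivAt F (z * Real.log z * Real.exp (-(a*z))
        - (1/a) * ((Real.log z + 1) * Real.exp (-(a*z)))) z := by
    intro z hz
    have hz0 : (0:ℝ) < z := hz.1
    have h1 : HasDerivAt (fun z : ℝ => Real.exp (-(a*z))) (-a * Real.exp (-(a*z))) z := by
      have := (Real.hasDerivAt_exp (-(a*z))).comp z (((hasDerivAt_id z).const_mul a).neg)
      simpa [mul_comm, Function.comp_def, Pi.neg_apply] using this
    have h2 : HasDerivAt (fun z : ℝ => z * Real.log z) (Real.log z + 1) z :=
      Real.hasDerivAt_mul_log hz0.ne'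
    have h3 := ((h2.mul h1).const_mul (-(1/a)))
    have h4 : z * Real.log z * Real.exp (-(a*z)) - (1/a) * ((Real.log z + 1) * Real.exp (-(a*z)))
        = -(1/a) * ((Real.log z + 1) * Real.exp (-(a*z))
          + z * Real.log z * (-a * Real.exp (-(a*z)))) := by
      field_simp
      ring
    rw [h4]
    exact h3
  have hFcont : ContinuousOn F (Icc (0:ℝ) 1) := by
    apply Continuous.continuousOn
    exact continuous_const.mul (Real.continuous_mul_log.mul
      (Real.continuous_exp.comp (by fun_prop)))
  have hintlog : IntervalIntegrable (fun z => Real.log z * Real.exp (-(a*z))) volume 0 1 := by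
    rw [intervalIntegrable_iff_integrableOn_Ioc_of_le zero_le_one]
    exact L2a a ha
  have hintG : IntervalIntegrable (fun z => z * Real.log z * Real.exp (-(a*z))) volume 0 1 :=
    (Real.continuous_mul_log.mul
      (Real.continuous_exp.comp (by fun_prop))).intervalIntegrable 0 1
  have hintB : IntervalIntegrable
      (fun z => (1/a) * ((Real.log z + 1) * Real.exp (-(a*z)))) volume 0 1 := by
    refine IntervalIntegrable.const_mul ?_ _
    have : (fun z => (Real.log z + 1) * Real.exp (-(a*z)))
        = fun z => Real.log z * Real.exp (-(a*z)) + Real.exp (-(a*z)) := by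
      funext z; ring
    rw [this]
    exact hintlog.add ((by fun_prop : Continuous fun z : ℝ => Real.exp (-(a*z))).intervalIntegrable 0 1)
  have key := intervalIntegral.integral_eq_sub_of_hasDeriv_right_of_le zero_le_one hFcont
    (fun z hz => (hFderiv z hz).hasDerivWithinAt) (hintG.sub hintB)
  have hF0 : F 0 = 0 := by simp [hF]
  have hF1 : F 1 = 0 := by simp [hF]
  rw [hF0, hF1, sub_zero] at key
  rw [intervalIntegral.integral_sub hintG hintB] at key
  have hexp01 : ∫ z in (0:ℝ)..1, Real.exp (-(a*z)) = (1 - Real.exp (-a)) / a := by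
    have hd : ∀ z ∈ uIcc (0:ℝ) 1,
        HasDerivAt (fun z : ℝ => -(1/a) * Real.exp (-(a*z))) (Real.exp (-(a*z))) z := by
      intro z _
      have h1 : HasDerivAt (fun z : ℝ => Real.exp (-(a*z))) (-a * Real.exp (-(a*z))) z := by
        have := (Real.hasDerivAt_exp (-(a*z))).comp z (((hasDerivAt_id z).const_mul a).neg)
        simpa [mul_comm, Function.comp_def, Pi.neg_apply] using this
      have := h1.const_mul (-(1/a))
      have he : Real.exp (-(a*z)) = -(1/a) * (-a * Real.exp (-(a*z))) := by
        field_simp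
      rw [he]
      exact this
    rw [intervalIntegral.integral_eq_sub_of_hasDerivAt hd
      ((by fun_prop : Continuous fun z : ℝ => Real.exp (-(a*z))).intervalIntegrable 0 1)]
    field_simp
    simp only [Real.exp_zero, mul_zero, neg_zero]
    ring
  have hintBval : ∫ z in (0:ℝ)..1, (1/a) * ((Real.log z + 1) * Real.exp (-(a*z)))
      = (1/a) * (((-Real.eulerMascheroniConstant - Real.log a) / a - expIntegralE1 a / a)
        + (1 - Real.exp (-a)) / a) := by
    rw [intervalIntegral.integral_const_mul]
    congr 1
    have : (fun z => (Real.log z + 1) * Real.exp (-(a*z)))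
        = fun z => Real.log z * Real.exp (-(a*z)) + Real.exp (-(a*z)) := by
      funext z; ring
    rw [this, intervalIntegral.integral_add hintlog
      ((by fun_prop : Continuous fun z : ℝ => Real.exp (-(a*z))).intervalIntegrable 0 1),
      L6 a ha, hexp01]
  have hgoal : ∫ z in (0:ℝ)..1, z * Real.log z * Real.exp (-a * z)
      = ∫ z in (0:ℝ)..1, z * Real.log z * Real.exp (-(a*z)) := by
    simp only [neg_mul]
  rw [hgoal]
  have : ∫ z in (0:ℝ)..1, z * Real.log z * Real.exp (-(a*z))
      = (1/a) * (((-Real.eulerMascheroniConstant - Real.log a) / a - expIntegralE1 a / a)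
        + (1 - Real.exp (-a)) / a) := by
    rw [← hintBval]
    linarith
  rw [this]
  field_simp
  ring
end

section
/- For every real number a > 0, ∫₀¹ (1 − (a/(1+a)) z) (ln z) e^{−a z} dz = −(1/(1+a))·(E₁(a) + ln a + γ_EM) − (1 − e^{−a})/(a(1+a)). (This is the evaluation of the integral I₂, equation (28), in the proof of the paper's Theorem 1, with a = k_s² and Ei(−a) = −E₁(a).) -/
open MeasureTheory Real

open Set Filter intervalIntegral
open scoped Topology

-- |log| integrable on Ioc 0 1
lemma aux_integrableOn_abs_log : IntegrableOn (fun x => |Real.log x|) (Set.Ioc (0:ℝ) 1) := by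
  have hrp : IntegrableOn (fun x : ℝ => x ^ (-(1/2) : ℝ)) (Set.Ioc (0:ℝ) 1) := by
    have := intervalIntegral.intervalIntegrable_rpow' (a := 0) (b := 1)
      (r := -(1/2)) (by norm_num)
    rwa [intervalIntegrable_iff_integrableOn_Ioc_of_le zero_le_one] at this
  refine Integrable.mono' (hrp.const_mul 2) (Real.measurable_log.abs.aestronglyMeasurable)
    ?_
  filter_upwards [ae_restrict_mem measurableSet_Ioc] with x hx
  have hx0 : 0 < x := hx.1
  rw [Real.norm_eq_abs, abs_abs, abs_of_nonpos (Real.log_nonpos hx0.le hx.2)]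
  have h1 : -Real.log x = 2 * Real.log (x ^ (-(1/2) : ℝ)) := by
    rw [Real.log_rpow hx0]; ring
  rw [h1]
  have h2 : Real.log (x ^ (-(1/2) : ℝ)) ≤ x ^ (-(1/2) : ℝ) :=
    Real.log_le_self (Real.rpow_nonneg hx0.le _)
  nlinarith

lemma aux_integrableOn_log_exp_Ioc {b : ℝ} (hb : 0 < b) :
    IntegrableOn (fun t => Real.log t * Real.exp (-b * t)) (Set.Ioc (0:ℝ) 1) := by
  refine Integrable.mono' aux_integrableOn_abs_log
    ((Real.measurable_log.mul (by fun_prop)).aestronglyMeasurable) ?_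
  filter_upwards [ae_restrict_mem measurableSet_Ioc] with x hx
  rw [Real.norm_eq_abs, abs_mul, Real.abs_exp]
  have : Real.exp (-b * x) ≤ 1 := by
    rw [Real.exp_le_one_iff]
    nlinarith [hx.1]
  nlinarith [abs_nonneg (Real.log x)]

lemma aux_tendsto_log_exp {c : ℝ} (hc : 0 < c) :
    Tendsto (fun x => Real.log x * Real.exp (-c * x)) atTop (𝓝 0) := by
  refine squeeze_zero_norm' ?_
    (tendsto_rpow_mul_exp_neg_mul_atTop_nhds_zero 1 c hc)
  filter_upwards [eventually_ge_atTop (1:ℝ)] with x hx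
  rw [Real.norm_eq_abs, abs_mul, Real.abs_exp, Real.rpow_one,
    abs_of_nonneg (Real.log_nonneg hx)]
  have := Real.log_le_self (le_trans zero_le_one hx)
  nlinarith [Real.exp_pos (-c * x)]

lemma aux_integrableOn_log_exp_Ioi {b : ℝ} (hb : 0 < b) :
    IntegrableOn (fun t => Real.log t * Real.exp (-b * t)) (Set.Ioi (1:ℝ)) := by
  refine integrable_of_isBigO_exp_neg (b := b/2) (by positivity)
    ((Real.continuousOn_log.mono (fun x hx => ne_of_gt (lt_of_lt_of_le zero_lt_one hx))).mul
      (by fun_prop)) ?_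
  have h0 : Tendsto (fun x => Real.log x * Real.exp (-(b/2) * x)) atTop (𝓝 0) :=
    aux_tendsto_log_exp (by positivity)
  have hO : (fun x => Real.log x * Real.exp (-(b/2) * x)) =O[atTop] (fun _ => (1:ℝ)) :=
    h0.isBigO_one ℝ
  have := hO.mul (Asymptotics.isBigO_refl (fun x => Real.exp (-(b/2) * x)) atTop)
  refine this.congr (fun x => ?_) (fun x => one_mul _)
  rw [mul_assoc, ← Real.exp_add]
  congr 1
  ring

lemma aux_integrableOn_log_exp_Ioi_zero {b : ℝ} (hb : 0 < b) :
    IntegrableOn (fun t => Real.log t * Real.exp (-b * t)) (Set.Ioi (0:ℝ)) := by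
  rw [← Set.Ioc_union_Ioi_eq_Ioi (zero_le_one)]
  exact (aux_integrableOn_log_exp_Ioc hb).union (aux_integrableOn_log_exp_Ioi hb)

lemma aux_integral_log_exp_gamma :
    ∫ t in Set.Ioi (0:ℝ), Real.log t * Real.exp (-t) = -Real.eulerMascheroniConstant := by
  have h1 := Complex.hasDerivAt_GammaIntegral (s := 1) (by norm_num)
  have heq : (∫ t : ℝ in Set.Ioi 0, (t:ℂ) ^ ((1:ℂ) - 1) * (Real.log t * Real.exp (-t)))
      = ((∫ t in Set.Ioi (0:ℝ), Real.log t * Real.exp (-t) : ℝ) : ℂ) := by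
    calc (∫ t : ℝ in Set.Ioi 0, (t:ℂ) ^ ((1:ℂ) - 1) * (Real.log t * Real.exp (-t)))
        = ∫ t : ℝ in Set.Ioi 0, ((Real.log t * Real.exp (-t) : ℝ) : ℂ) := by
          congr 1
          funext t
          simp [sub_self, Complex.cpow_zero, Complex.ofReal_mul]
      _ = _ := _root_.integral_ofReal
  rw [heq] at h1
  have hev : Complex.Gamma =ᶠ[𝓝 (1:ℂ)] Complex.GammaIntegral := by
    have hopen : IsOpen {s : ℂ | 0 < s.re} := isOpen_lt continuous_const Complex.continuous_re
    filter_upwards [hopen.mem_nhds (by norm_num : (0:ℝ) < (1:ℂ).re)] with s hs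
    exact Complex.Gamma_eq_integral hs
  have h2 : HasDerivAt Complex.Gamma
      ((∫ t in Set.Ioi (0:ℝ), Real.log t * Real.exp (-t) : ℝ) : ℂ) 1 :=
    h1.congr_of_eventuallyEq hev
  have h3 := Complex.hasDerivAt_Gamma_one
  have h4 := h2.unique h3
  exact_mod_cast h4

lemma aux_integral_exp_Ioi_zero {b : ℝ} (hb : 0 < b) :
    ∫ x in Set.Ioi (0:ℝ), Real.exp (-b * x) = b⁻¹ := by
  have h := integral_comp_mul_left_Ioi (fun t => Real.exp (-t)) 0 hb
  rw [mul_zero, integral_exp_neg_Ioi_zero, smul_eq_mul, mul_one] at h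
  rw [← h]
  congr 1
  funext x
  rw [neg_mul]

lemma aux_integral_log_exp_Ioi_zero {a : ℝ} (ha : 0 < a) :
    ∫ t in Set.Ioi (0:ℝ), Real.log t * Real.exp (-a * t)
      = (-Real.eulerMascheroniConstant - Real.log a) / a := by
  have hsub := integral_comp_mul_left_Ioi (fun t => Real.log t * Real.exp (-t)) 0 ha
  rw [mul_zero, aux_integral_log_exp_gamma, smul_eq_mul] at hsub
  have hcongr : ∀ x ∈ Set.Ioi (0:ℝ),
      Real.log (a*x) * Real.exp (-(a*x))
        = Real.log a * Real.exp (-a * x) + Real.log x * Real.exp (-a * x) := by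
    intro x hx
    rw [Real.log_mul ha.ne' (ne_of_gt hx), neg_mul]
    ring
  rw [setIntegral_congr_fun measurableSet_Ioi hcongr,
    integral_add ((exp_neg_integrableOn_Ioi 0 ha).const_mul _)
      (aux_integrableOn_log_exp_Ioi_zero ha),
    MeasureTheory.integral_const_mul, aux_integral_exp_Ioi_zero ha] at hsub
  field_simp at hsub ⊢
  linarith

lemma aux_integrableOn_exp_div_Ioi {a : ℝ} (ha : 0 < a) :
    IntegrableOn (fun z => Real.exp (-a * z) / z) (Set.Ioi (1:ℝ)) := by
  refine Integrable.mono' (exp_neg_integrableOn_Ioi 1 ha)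
    (((Real.measurable_exp.comp (measurable_id.const_mul (-a))).div
      measurable_id).aestronglyMeasurable) ?_
  filter_upwards [ae_restrict_mem measurableSet_Ioi] with x hx
  rw [Real.norm_eq_abs, abs_div, Real.abs_exp, abs_of_pos (lt_trans zero_lt_one hx)]
  exact div_le_self (Real.exp_pos _).le (le_of_lt hx)

lemma aux_E1 {a : ℝ} (ha : 0 < a) :
    ∫ z in Set.Ioi (1:ℝ), Real.exp (-a * z) / z = expIntegralE1 a := by
  have h := integral_comp_mul_left_Ioi (fun t => Real.exp (-t) / t) 1 ha
  rw [mul_one, smul_eq_mul] at h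
  have hfun : ∀ x : ℝ, Real.exp (-(a*x)) / (a*x) = a⁻¹ * (Real.exp (-a*x) / x) := by
    intro x
    rw [neg_mul, div_eq_mul_inv, div_eq_mul_inv, mul_inv]
    ring
  simp only [hfun] at h
  rw [MeasureTheory.integral_const_mul] at h
  have := mul_left_cancel₀ (inv_ne_zero ha.ne') h
  rw [this]
  rfl

lemma aux_integral_log_exp_Ioi_one {a : ℝ} (ha : 0 < a) :
    ∫ z in Set.Ioi (1:ℝ), Real.log z * Real.exp (-a * z) = expIntegralE1 a / a := by
  set F : ℝ → ℝ := fun z => Real.log z * (-Real.exp (-a * z) / a) with hF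
  set F' : ℝ → ℝ := fun x =>
    Real.log x * Real.exp (-a * x) - a⁻¹ * (Real.exp (-a * x) / x) with hF'
  have hderiv : ∀ x ∈ Set.Ici (1:ℝ), HasDerivAt F (F' x) x := by
    intro x hx
    have hx0 : 0 < x := lt_of_lt_of_le zero_lt_one hx
    have h1 : HasDerivAt Real.log x⁻¹ x := Real.hasDerivAt_log hx0.ne'
    have e1 : HasDerivAt (fun z : ℝ => -a * z) (-a) x := by
      simpa using (hasDerivAt_id x).const_mul (-a)
    have e2 := e1.exp
    have h2 : HasDerivAt (fun z => -Real.exp (-a * z) / a) (Real.exp (-a * x)) x := by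
      have := e2.neg.div_const a
      exact this.congr_deriv (by field_simp)
    have := h1.mul h2
    refine this.congr_deriv ?_
    simp only [hF']
    field_simp
    ring
  have htend : Tendsto F atTop (𝓝 0) := by
    have h := (aux_tendsto_log_exp ha).const_mul (-a⁻¹)
    rw [mul_zero] at h
    refine h.congr (fun z => ?_)
    simp only [hF]
    field_simp
  have hint : IntegrableOn F' (Set.Ioi (1:ℝ)) :=
    (aux_integrableOn_log_exp_Ioi ha).sub ((aux_integrableOn_exp_div_Ioi ha).const_mul a⁻¹)
  have key := integral_Ioi_of_hasDerivAt_of_tendsto' hderiv hint htend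
  have hF1 : F 1 = 0 := by simp [hF]
  rw [hF1, sub_zero] at key
  have hsplit : ∫ x in Set.Ioi (1:ℝ), F' x
      = (∫ x in Set.Ioi (1:ℝ), Real.log x * Real.exp (-a * x))
        - a⁻¹ * ∫ x in Set.Ioi (1:ℝ), Real.exp (-a * x) / x := by
    rw [integral_sub (aux_integrableOn_log_exp_Ioi ha)
      ((aux_integrableOn_exp_div_Ioi ha).const_mul a⁻¹), MeasureTheory.integral_const_mul]
  rw [hsplit, aux_E1 ha] at key
  rw [div_eq_inv_mul]
  linarith

lemma aux_J0 {a : ℝ} (ha : 0 < a) :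
    ∫ z in (0:ℝ)..1, Real.log z * Real.exp (-a * z)
      = (-Real.eulerMascheroniConstant - Real.log a - expIntegralE1 a) / a := by
  have hsplit : ∫ t in Set.Ioi (0:ℝ), Real.log t * Real.exp (-a * t)
      = (∫ t in Set.Ioc (0:ℝ) 1, Real.log t * Real.exp (-a * t))
        + ∫ t in Set.Ioi (1:ℝ), Real.log t * Real.exp (-a * t) := by
    rw [← Set.Ioc_union_Ioi_eq_Ioi zero_le_one]
    exact setIntegral_union (Set.Ioc_disjoint_Ioi le_rfl) measurableSet_Ioi
      (aux_integrableOn_log_exp_Ioc ha) (aux_integrableOn_log_exp_Ioi ha)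
  rw [aux_integral_log_exp_Ioi_zero ha, aux_integral_log_exp_Ioi_one ha] at hsplit
  rw [intervalIntegral.integral_of_le zero_le_one]
  have h2 : ∫ t in Set.Ioc (0:ℝ) 1, Real.log t * Real.exp (-a * t)
      = (-Real.eulerMascheroniConstant - Real.log a) / a - expIntegralE1 a / a := by
    linarith
  rw [h2]
  ring

lemma aux_hasDerivAt_exp_aux {a : ℝ} (ha : 0 < a) (x : ℝ) :
    HasDerivAt (fun z => -Real.exp (-a * z) / a) (Real.exp (-a * x)) x := by
  have e1 : HasDerivAt (fun z : ℝ => -a * z) (-a) x := by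
    simpa using (hasDerivAt_id x).const_mul (-a)
  have := e1.exp.neg.div_const a
  exact this.congr_deriv (by field_simp)

lemma aux_K {a : ℝ} (ha : 0 < a) :
    ∫ z in (0:ℝ)..1, Real.exp (-a * z) = (1 - Real.exp (-a)) / a := by
  rw [intervalIntegral.integral_eq_sub_of_hasDerivAt
    (fun x _ => aux_hasDerivAt_exp_aux ha x)
    ((Real.continuous_exp.comp (continuous_const.mul continuous_id)).continuousOn.intervalIntegrable)]
  rw [mul_one, mul_zero, Real.exp_zero]
  field_simp
  ring

lemma aux_integrableOn_zlog_exp_Ioc {a : ℝ} (ha : 0 < a) :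
    IntegrableOn (fun z => z * Real.log z * Real.exp (-a * z)) (Set.Ioc (0:ℝ) 1) := by
  refine Integrable.mono' aux_integrableOn_abs_log
    (((measurable_id.mul Real.measurable_log).mul (by fun_prop)).aestronglyMeasurable) ?_
  filter_upwards [ae_restrict_mem measurableSet_Ioc] with x hx
  rw [Real.norm_eq_abs, abs_mul, abs_mul, Real.abs_exp, abs_of_pos hx.1]
  have h1 : Real.exp (-a * x) ≤ 1 := by
    rw [Real.exp_le_one_iff]
    nlinarith [hx.1]
  nlinarith [abs_nonneg (Real.log x), hx.1, hx.2, Real.exp_pos (-a * x),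
    mul_nonneg hx.1.le (abs_nonneg (Real.log x))]

lemma aux_J1 {a : ℝ} (ha : 0 < a) :
    ∫ z in (0:ℝ)..1, z * Real.log z * Real.exp (-a * z)
      = a⁻¹ * ((∫ z in (0:ℝ)..1, Real.log z * Real.exp (-a * z)) + (1 - Real.exp (-a)) / a) := by
  set F : ℝ → ℝ := fun z => z * Real.log z * (-Real.exp (-a * z) / a) with hF
  set F' : ℝ → ℝ := fun z =>
    z * Real.log z * Real.exp (-a * z)
      - a⁻¹ * (Real.log z * Real.exp (-a * z)) - a⁻¹ * Real.exp (-a * z) with hF'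
  have hderiv : ∀ x ∈ Set.Ioo (0:ℝ) 1, HasDerivAt F (F' x) x := by
    intro x hx
    have hx0 : 0 < x := hx.1
    have h1 : HasDerivAt (fun z : ℝ => z * Real.log z) (Real.log x + 1) x := by
      have := (hasDerivAt_id x).mul (Real.hasDerivAt_log hx0.ne')
      exact this.congr_deriv (by simp [hx0.ne'])
    have := h1.mul (aux_hasDerivAt_exp_aux ha x)
    refine this.congr_deriv ?_
    simp only [hF']
    field_simp
    ring
  have hII1 : IntervalIntegrable (fun z => Real.log z * Real.exp (-a * z)) volume 0 1 := by
    rw [intervalIntegrable_iff_integrableOn_Ioc_of_le zero_le_one]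
    exact aux_integrableOn_log_exp_Ioc ha
  have hII3 : IntervalIntegrable (fun z => z * Real.log z * Real.exp (-a * z)) volume 0 1 := by
    rw [intervalIntegrable_iff_integrableOn_Ioc_of_le zero_le_one]
    exact aux_integrableOn_zlog_exp_Ioc ha
  have hIIe : IntervalIntegrable (fun z => Real.exp (-a * z)) volume 0 1 :=
    (Real.continuous_exp.comp (continuous_const.mul continuous_id)).continuousOn.intervalIntegrable
  have hint : IntervalIntegrable F' volume 0 1 :=
    (hII3.sub (hII1.const_mul a⁻¹)).sub (hIIe.const_mul a⁻¹)
  have htend0 : Tendsto F (𝓝[>] (0:ℝ)) (𝓝 0) := by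
    have hc : Continuous (fun z => Real.negMulLog z * (Real.exp (-a * z) / a)) :=
      Real.continuous_negMulLog.mul
        ((Real.continuous_exp.comp (continuous_const.mul continuous_id)).div_const a)
    have this : Tendsto (fun z => Real.negMulLog z * (Real.exp (-a * z) / a)) (𝓝[>] (0:ℝ))
        (𝓝 (Real.negMulLog 0 * (Real.exp (-a * 0) / a))) :=
      (hc.tendsto 0).mono_left nhdsWithin_le_nhds
    rw [show Real.negMulLog 0 * (Real.exp (-a * 0) / a) = 0 by simp [Real.negMulLog]] at this
    refine this.congr (fun z => ?_)
    simp only [Real.negMulLog, hF]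
    ring
  have htend1 : Tendsto F (𝓝[<] (1:ℝ)) (𝓝 0) := by
    have hc : Continuous F := by
      simp only [hF]
      fun_prop (disch := assumption)
    have this : Tendsto F (𝓝[<] (1:ℝ)) (𝓝 (F 1)) :=
      (hc.tendsto 1).mono_left nhdsWithin_le_nhds
    rwa [show F 1 = 0 by simp [hF]] at this
  have key := intervalIntegral.integral_eq_sub_of_hasDerivAt_of_tendsto zero_lt_one
    hderiv hint htend0 htend1
  rw [sub_zero] at key
  have hsplit : ∫ z in (0:ℝ)..1, F' z
      = (∫ z in (0:ℝ)..1, z * Real.log z * Real.exp (-a * z))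
        - a⁻¹ * (∫ z in (0:ℝ)..1, Real.log z * Real.exp (-a * z))
        - a⁻¹ * ∫ z in (0:ℝ)..1, Real.exp (-a * z) := by
    rw [intervalIntegral.integral_sub (hII3.sub (hII1.const_mul a⁻¹)) (hIIe.const_mul a⁻¹),
      intervalIntegral.integral_sub hII3 (hII1.const_mul a⁻¹),
      intervalIntegral.integral_const_mul, intervalIntegral.integral_const_mul]
  rw [hsplit, aux_K ha] at key
  linarith [key]

/-- Evaluation of the integral `I₂`, equation (28), in the proof of the paper's Theorem 1. -/
theorem integral_I2 (a : ℝ) (ha : 0 < a) :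
    ∫ z in (0 : ℝ)..1, (1 - (a / (1 + a)) * z) * Real.log z * Real.exp (-a * z)
      = -(1 / (1 + a)) * (expIntegralE1 a + Real.log a + Real.eulerMascheroniConstant)
        - (1 - Real.exp (-a)) / (a * (1 + a)) := by
  have h1a : (0:ℝ) < 1 + a := by linarith
  have hII1 : IntervalIntegrable (fun z => Real.log z * Real.exp (-a * z)) volume 0 1 := by
    rw [intervalIntegrable_iff_integrableOn_Ioc_of_le zero_le_one]
    exact aux_integrableOn_log_exp_Ioc ha
  have hII3 : IntervalIntegrable (fun z => z * Real.log z * Real.exp (-a * z)) volume 0 1 := by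
    rw [intervalIntegrable_iff_integrableOn_Ioc_of_le zero_le_one]
    exact aux_integrableOn_zlog_exp_Ioc ha
  have hcongr : ∀ z ∈ Set.uIcc (0:ℝ) 1,
      (1 - (a / (1 + a)) * z) * Real.log z * Real.exp (-a * z)
        = Real.log z * Real.exp (-a * z)
          - (a / (1 + a)) * (z * Real.log z * Real.exp (-a * z)) := by
    intro z _
    ring
  rw [intervalIntegral.integral_congr hcongr,
    intervalIntegral.integral_sub hII1 (hII3.const_mul _),
    intervalIntegral.integral_const_mul, aux_J1 ha, aux_J0 ha]
  field_simp
  ring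
end

section
/- Let a > 0 and c > 1 be real numbers. Then ∫₀¹ ln(1 + ((1−c)/c) z) · (1 − (a/(1+a)) z) · e^{−a z} dz = (1/(1+a)) · [ (e^{−c a/(c−1)}/(c−1)) · ∫_{a/(c−1)}^{c a/(c−1)} (e^t/t) dt − (1 − e^{−a})/a ]. (This is the closed-form evaluation of the integral I₃, equations (29)–(35), in the proof of the paper's Theorem 1; note that 1 + ((1−c)/c)z > 1/c > 0 for z ∈ (0,1).) -/
open MeasureTheory Real

/-- Closed-form evaluation of the integral `I₃`, equations (29)–(35), in the proof of the
paper's Theorem 1. -/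
theorem integral_I3 (a c : ℝ) (ha : 0 < a) (hc : 1 < c) :
    ∫ z in (0 : ℝ)..1,
        Real.log (1 + ((1 - c) / c) * z) * (1 - (a / (1 + a)) * z) * Real.exp (-a * z)
      = (1 / (1 + a)) *
          ((Real.exp (-(c * a) / (c - 1)) / (c - 1)) *
              (∫ t in Set.Ioc (a / (c - 1)) (c * a / (c - 1)), Real.exp t / t)
            - (1 - Real.exp (-a)) / a) := by
  have hc1 : (0:ℝ) < c - 1 := by linarith
  have hc0 : (0:ℝ) < c := by linarith
  have ha1 : (0:ℝ) < 1 + a := by linarith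
  set α : ℝ := c * a / (c - 1) with hα
  set p : ℝ := a / (c - 1) with hp
  have hpα : p ≤ α := by
    rw [hp, hα, div_le_div_iff₀ hc1 hc1]
    nlinarith [mul_pos (mul_pos ha hc1) hc1]
  -- positivity of the denominator on [0,1]
  have hD : ∀ z ∈ Set.uIcc (0:ℝ) 1, 0 < c - (c-1)*z := by
    intro z hz
    rw [Set.uIcc_of_le (by norm_num)] at hz
    nlinarith [hz.1, hz.2]
  -- the key derivative computation (integration by parts in disguise)
  have hderiv : ∀ z ∈ Set.uIcc (0:ℝ) 1,
      HasDerivAt (fun z => Real.log (1 + ((1 - c) / c) * z) * ((z - 1)/(1+a) * Real.exp (-a*z)))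
        (Real.log (1 + ((1 - c) / c) * z) * (1 - (a/(1+a)) * z) * Real.exp (-a*z)
          + (1/(1+a)) * (Real.exp (-a*z) - Real.exp (-a*z)/(c - (c-1)*z))) z := by
    intro z hz
    have hDz := hD z hz
    have h1z : 1 + (1-c)/c * z = (c - (c-1)*z)/c := by field_simp; ring
    have hne : 1 + (1-c)/c * z ≠ 0 := by rw [h1z]; positivity
    have hlin : HasDerivAt (fun z : ℝ => 1 + (1-c)/c * z) ((1-c)/c) z := by
      simpa using ((hasDerivAt_id z).const_mul ((1-c)/c)).const_add 1
    have hlog : HasDerivAt (fun z => Real.log (1 + (1-c)/c * z)) ((1-c)/c / (1 + (1-c)/c * z)) z :=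
      hlin.log hne
    have hexp : HasDerivAt (fun z : ℝ => Real.exp (-a*z)) (-a * Real.exp (-a*z)) z := by
      simpa [mul_comm] using ((hasDerivAt_id z).const_mul (-a)).exp
    have hpoly : HasDerivAt (fun z : ℝ => (z - 1)/(1+a)) (1/(1+a)) z := by
      simpa using ((hasDerivAt_id z).sub_const 1).div_const (1+a)
    have hF : HasDerivAt (fun z : ℝ => (z-1)/(1+a) * Real.exp (-a*z))
        (1/(1+a) * Real.exp (-a*z) + (z-1)/(1+a) * (-a * Real.exp (-a*z))) z := hpoly.mul hexp
    have hmain := hlog.mul hF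
    refine hmain.congr_deriv ?_
    rw [h1z]
    field_simp
    ring
  -- continuity facts
  have hcontlog : ContinuousOn (fun z => Real.log (1 + (1-c)/c * z)) (Set.uIcc (0:ℝ) 1) := by
    apply ContinuousOn.log
    · fun_prop
    · intro z hz
      have hDz := hD z hz
      have h1z : 1 + (1-c)/c * z = (c - (c-1)*z)/c := by field_simp; ring
      rw [h1z]
      positivity
  have hcontexp : Continuous (fun z : ℝ => Real.exp (-a*z)) := by fun_prop
  have hcontL : ContinuousOn
      (fun z => Real.log (1 + ((1 - c) / c) * z) * (1 - (a/(1+a)) * z) * Real.exp (-a*z))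
      (Set.uIcc (0:ℝ) 1) :=
    (hcontlog.mul (by fun_prop)).mul hcontexp.continuousOn
  have hcontED : ContinuousOn (fun z => Real.exp (-a*z)/(c - (c-1)*z)) (Set.uIcc (0:ℝ) 1) :=
    hcontexp.continuousOn.div (by fun_prop) (fun z hz => (hD z hz).ne')
  have hcontr : ContinuousOn
      (fun z => (1/(1+a)) * (Real.exp (-a*z) - Real.exp (-a*z)/(c - (c-1)*z)))
      (Set.uIcc (0:ℝ) 1) :=
    (hcontexp.continuousOn.sub hcontED).const_smul (1/(1+a)) |>.congr (fun z _ => by simp [smul_eq_mul])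
  have hintL : IntervalIntegrable
      (fun z => Real.log (1 + ((1 - c) / c) * z) * (1 - (a/(1+a)) * z) * Real.exp (-a*z))
      volume 0 1 := hcontL.intervalIntegrable
  have hintr : IntervalIntegrable
      (fun z => (1/(1+a)) * (Real.exp (-a*z) - Real.exp (-a*z)/(c - (c-1)*z)))
      volume 0 1 := hcontr.intervalIntegrable
  -- the total derivative integrates to zero
  have hzero : (∫ z in (0:ℝ)..1,
      (Real.log (1 + ((1 - c) / c) * z) * (1 - (a/(1+a)) * z) * Real.exp (-a*z)
        + (1/(1+a)) * (Real.exp (-a*z) - Real.exp (-a*z)/(c - (c-1)*z)))) = 0 := by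
    rw [intervalIntegral.integral_eq_sub_of_hasDerivAt hderiv (hintL.add hintr)]
    norm_num
  rw [intervalIntegral.integral_add hintL hintr] at hzero
  -- value of ∫ exp(-a z)
  have hexpint : (∫ z in (0:ℝ)..1, Real.exp (-a*z)) = (1 - Real.exp (-a))/a := by
    have hd : ∀ z ∈ Set.uIcc (0:ℝ) 1,
        HasDerivAt (fun z : ℝ => -(Real.exp (-a*z)/a)) (Real.exp (-a*z)) z := by
      intro z _
      have hexp : HasDerivAt (fun z : ℝ => Real.exp (-a*z)) (-a * Real.exp (-a*z)) z := by
        simpa [mul_comm] using ((hasDerivAt_id z).const_mul (-a)).exp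
      have := (hexp.div_const a).neg
      refine this.congr_deriv ?_
      rw [neg_mul, neg_div, neg_neg, mul_div_cancel_left₀ _ ha.ne']
    rw [intervalIntegral.integral_eq_sub_of_hasDerivAt hd
      (hcontexp.intervalIntegrable 0 1)]
    simp only [mul_zero, mul_one, Real.exp_zero]
    field_simp
    ring
  -- substitution in ∫ exp(-a z)/(c-(c-1)z)
  have hJ : (∫ z in (0:ℝ)..1, Real.exp (-a*z)/(c - (c-1)*z))
      = Real.exp (-α)/(c-1) * ∫ t in p..α, Real.exp t / t := by
    have hpt : ∀ z : ℝ, Real.exp (-a*z)/(c - (c-1)*z)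
        = (fun t => Real.exp (t - α) * (a/((c-1)*t))) (-a*z + α) := by
      intro z
      simp only
      have h2 : (c-1)*(-a*z + α) = a*(c - (c-1)*z) := by
        rw [hα]
        field_simp
        ring
      rw [show -a*z + α - α = -a*z by ring, h2, div_mul_eq_div_div, div_self ha.ne',
        mul_one_div]
    calc (∫ z in (0:ℝ)..1, Real.exp (-a*z)/(c - (c-1)*z))
        = ∫ z in (0:ℝ)..1, (fun t => Real.exp (t - α) * (a/((c-1)*t))) (-a*z + α) := by
          simp only [← hpt]
      _ = (-a)⁻¹ • ∫ t in (-a*0 + α)..(-a*1 + α), Real.exp (t - α) * (a/((c-1)*t)) :=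
          by exact intervalIntegral.integral_comp_mul_add (fun t => Real.exp (t - α) * (a/((c-1)*t))) (neg_ne_zero.mpr ha.ne') α
      _ = (-a)⁻¹ • ∫ t in α..p, Real.exp (t - α) * (a/((c-1)*t)) := by
          rw [show -a*0 + α = α by ring, show -a*1 + α = p by rw [hα, hp]; field_simp; ring]
      _ = (-a)⁻¹ • (-(∫ t in p..α, Real.exp (t - α) * (a/((c-1)*t)))) := by
          rw [intervalIntegral.integral_symm]
      _ = (-a)⁻¹ • (-(∫ t in p..α, (a * Real.exp (-α)/(c-1)) * (Real.exp t / t))) := by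
          congr 2
          apply intervalIntegral.integral_congr
          intro t ht
          rw [Set.uIcc_of_le hpα] at ht
          have ht0 : 0 < t := lt_of_lt_of_le (by rw [hp]; positivity) ht.1
          simp only [Real.exp_sub, Real.exp_neg]
          field_simp
      _ = Real.exp (-α)/(c-1) * ∫ t in p..α, Real.exp t / t := by
          rw [intervalIntegral.integral_const_mul, smul_eq_mul]
          field_simp
  -- put everything together
  rw [intervalIntegral.integral_const_mul, intervalIntegral.integral_sub
    (hcontexp.intervalIntegrable 0 1) hcontED.intervalIntegrable, hexpint, hJ] at hzero
  rw [← intervalIntegral.integral_of_le hpα, show -(c*a)/(c-1) = -α by rw [hα]; ring]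
  linarith [hzero]
end
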